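/- arXiv:2602.22083 — 7 statements merged into one kernel-verified Lean document; each statement's English description precedes it below -/
import Mathlib

section
/- With the setup of the coarsening-error identity, suppose additionally that μ is continuously differentiable on each bin B_k with |μ'(m)| ≤ L for all m in every bin, and each bin B_k is an interval of width w_k ≤ w_max. Then |Σ_k {μ_k(1) − μ_k(0)} g_k(0)| ≤ L · Σ_k w_k g_k(0) ≤ L · w_max. -/
open MeasureTheory

/-- Quantitative first-order bound of Lemma 1: the coarsening error is bounded
by `L` times the `g₀`-weighted average bin width, which is at most `L * wmax`. -/
theorem stmt1 (K : ℕ) (c d : Fin K → ℝ) (μ μ' f₀ f₁ : ℝ → ℝ) (L wmax : ℝ)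
    (hcd : ∀ k, c k ≤ d k)
    (hw : ∀ k, d k - c k ≤ wmax)
    (hdisj : Pairwise fun i j =>
      Disjoint (Set.Icc (c i) (d i)) (Set.Icc (c j) (d j)))
    (hf₀nn : ∀ m, 0 ≤ f₀ m) (hf₁nn : ∀ m, 0 ≤ f₁ m)
    (hsupp : ∀ m, f₀ m ≠ 0 → m ∈ ⋃ k, Set.Icc (c k) (d k))
    (hf₀1 : ∫ m, f₀ m = 1)
    (hderiv : ∀ k, ∀ m ∈ Set.Icc (c k) (d k), HasDerivAt μ (μ' m) m ∧ |μ' m| ≤ L)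
    (hLnn : 0 ≤ L)
    (hfint : ∀ (a : Fin 2) k,
      IntegrableOn (fun m => (if a = 0 then f₀ else f₁) m) (Set.Icc (c k) (d k)))
    (hμfint : ∀ (a : Fin 2) k,
      IntegrableOn (fun m => μ m * (if a = 0 then f₀ else f₁) m) (Set.Icc (c k) (d k)))
    (hmfint : ∀ (a : Fin 2) k,
      IntegrableOn (fun m => m * (if a = 0 then f₀ else f₁) m) (Set.Icc (c k) (d k)))
    (g : Fin 2 → Fin K → ℝ)
    (hg : ∀ a k, g a k = ∫ m in Set.Icc (c k) (d k), (if a = 0 then f₀ else f₁) m)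
    (hgpos : ∀ a k, 0 < g a k)
    (hgsum : ∑ k, g 0 k = 1)
    (μk : Fin 2 → Fin K → ℝ)
    (hμk : ∀ a k, μk a k =
      (∫ m in Set.Icc (c k) (d k), μ m * (if a = 0 then f₀ else f₁) m) / g a k) :
    |∑ k, (μk 1 k - μk 0 k) * g 0 k| ≤ L * ∑ k, (d k - c k) * g 0 k ∧
      L * ∑ k, (d k - c k) * g 0 k ≤ L * wmax := by
  have hfnn : ∀ (a : Fin 2) m, 0 ≤ (if a = 0 then f₀ else f₁) m := by
    intro a m; split
    · exact hf₀nn m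
    · exact hf₁nn m
  have key : ∀ k, |μk 1 k - μk 0 k| ≤ L * (d k - c k) := by
    intro k
    set B := Set.Icc (c k) (d k) with hB
    have hBne : B.Nonempty := Set.nonempty_Icc.2 (hcd k)
    have hBcomp : IsCompact B := isCompact_Icc
    have hcont : ContinuousOn μ B := fun m hm =>
      ((hderiv k m hm).1).continuousAt.continuousWithinAt
    obtain ⟨xmax, hxmaxB, hxmax⟩ := hBcomp.exists_isMaxOn hBne hcont
    obtain ⟨xmin, hxminB, hxmin⟩ := hBcomp.exists_isMinOn hBne hcont
    -- Lipschitz-type bound from the derivative bound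
    have hlip : μ xmax - μ xmin ≤ L * (d k - c k) := by
      have := (convex_Icc (c k) (d k)).norm_image_sub_le_of_norm_hasDerivWithin_le
        (f' := μ') (fun m hm => ((hderiv k m hm).1).hasDerivWithinAt)
        (fun m hm => (hderiv k m hm).2) hxminB hxmaxB
      have habs : |μ xmax - μ xmin| ≤ L * |xmax - xmin| := by
        simpa [Real.norm_eq_abs] using this
      have h1 : μ xmax - μ xmin ≤ |μ xmax - μ xmin| := le_abs_self _
      have h3 := hxmaxB
      have h4 := hxminB
      rw [hB, Set.mem_Icc] at h3 h4
      have h2 : |xmax - xmin| ≤ d k - c k := by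
        rw [abs_sub_le_iff]
        exact ⟨by linarith, by linarith⟩
      calc μ xmax - μ xmin ≤ L * |xmax - xmin| := le_trans h1 habs
        _ ≤ L * (d k - c k) := mul_le_mul_of_nonneg_left h2 hLnn
    -- each μk a k lies between μ xmin and μ xmax
    have hbound : ∀ a : Fin 2, μ xmin ≤ μk a k ∧ μk a k ≤ μ xmax := by
      intro a
      have hint_up : (∫ m in B, μ m * (if a = 0 then f₀ else f₁) m)
          ≤ ∫ m in B, μ xmax * (if a = 0 then f₀ else f₁) m := by
        refine setIntegral_mono_on (hμfint a k) ((hfint a k).const_mul _)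
          measurableSet_Icc ?_
        intro m hm
        exact mul_le_mul_of_nonneg_right (hxmax hm) (hfnn a m)
      have hint_lo : (∫ m in B, μ xmin * (if a = 0 then f₀ else f₁) m)
          ≤ ∫ m in B, μ m * (if a = 0 then f₀ else f₁) m := by
        refine setIntegral_mono_on ((hfint a k).const_mul _) (hμfint a k)
          measurableSet_Icc ?_
        intro m hm
        exact mul_le_mul_of_nonneg_right (hxmin hm) (hfnn a m)
      have hconst : ∀ r : ℝ, (∫ m in B, r * (if a = 0 then f₀ else f₁) m)
          = r * g a k := by
        intro r
        rw [hg a k, ← integral_const_mul]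
      rw [hconst] at hint_up hint_lo
      constructor
      · rw [hμk a k, le_div_iff₀ (hgpos a k)]
        linarith
      · rw [hμk a k, div_le_iff₀ (hgpos a k)]
        linarith
    obtain ⟨h10, h11⟩ := hbound 1
    obtain ⟨h00, h01⟩ := hbound 0
    rw [abs_sub_le_iff]
    constructor <;> linarith
  constructor
  · calc |∑ k, (μk 1 k - μk 0 k) * g 0 k|
        ≤ ∑ k, |(μk 1 k - μk 0 k) * g 0 k| := Finset.abs_sum_le_sum_abs _ _
      _ ≤ ∑ k, (L * (d k - c k)) * g 0 k := by
          refine Finset.sum_le_sum fun k _ => ?_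
          rw [abs_mul, abs_of_pos (hgpos 0 k)]
          exact mul_le_mul_of_nonneg_right (key k) (hgpos 0 k).le
      _ = L * ∑ k, (d k - c k) * g 0 k := by
          rw [Finset.mul_sum]; congr 1; ext k; ring
  · have : ∑ k, (d k - c k) * g 0 k ≤ wmax := by
      calc ∑ k, (d k - c k) * g 0 k
          ≤ ∑ k, wmax * g 0 k :=
            Finset.sum_le_sum fun k _ =>
              mul_le_mul_of_nonneg_right (hw k) (hgpos 0 k).le
        _ = wmax := by rw [← Finset.mul_sum, hgsum, mul_one]
    exact mul_le_mul_of_nonneg_left this hLnn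
end

section
/- Under the setup of the coarsening-error identity, suppose μ is twice continuously differentiable on each bin B_k with |μ''| ≤ L there, each bin is an interval of width w_k ≤ w_max, and let m_k(0) denote the mean of M restricted to B_k under f₀. Then the debiased coarsened functional θ̃ = Σ_k μ(m_k(0)) g_k(0) satisfies |θ̃ − ∫ μ(m) f₀(m) dm| ≤ (L/8) Σ_k w_k² g_k(0) ≤ L w_max² / 8. -/
open MeasureTheory Set

lemma taylor_quad {c d L : ℝ} {μ : ℝ → ℝ} (hcd : c < d)
    (hC2 : ContDiffOn ℝ 2 μ (Set.Icc c d))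
    (hL : ∀ m ∈ Set.Icc c d, |iteratedDerivWithin 2 μ (Set.Icc c d) m| ≤ L)
    {a x : ℝ} (ha : a ∈ Set.Icc c d) (hx : x ∈ Set.Icc c d) :
    |μ x - μ a - derivWithin μ (Set.Icc c d) a * (x - a)| ≤ L / 2 * (x - a) ^ 2 := by
  set D := Set.Icc c d with hD
  have hUD : UniqueDiffOn ℝ D := uniqueDiffOn_Icc hcd
  set μ1 := derivWithin μ D with hμ1def
  have hμ1 : ContDiffOn ℝ 1 μ1 D := hC2.derivWithin hUD (by norm_num)
  have hμdiff : DifferentiableOn ℝ μ D := hC2.differentiableOn (by norm_num)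
  have hlip : ∀ y ∈ D, ∀ z ∈ D, |μ1 z - μ1 y| ≤ L * |z - y| := by
    intro y hy z hz
    have := Convex.norm_image_sub_le_of_norm_derivWithin_le
      (hμ1.differentiableOn (by norm_num))
      (fun m hm => by
        have h2 : iteratedDerivWithin 2 μ D m = derivWithin μ1 D m := by
          rw [show (2:ℕ) = 1 + 1 from rfl, iteratedDerivWithin_succ]
          exact derivWithin_congr (fun y hy => congrFun iteratedDerivWithin_one y)
            (congrFun iteratedDerivWithin_one m)
        have := hL m hm
        rw [h2] at this
        simpa using this)
      (convex_Icc c d) hy hz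
    simpa using this
  have hderiv : ∀ t ∈ Set.Ioo c d,
      HasDerivAt (fun y => μ y - μ1 a * y) (μ1 t - μ1 a) t := by
    intro t ht
    have h1 : HasDerivAt μ (μ1 t) t := by
      have := (hμdiff t (Set.Ioo_subset_Icc_self ht)).hasDerivWithinAt
      exact this.hasDerivAt (Icc_mem_nhds ht.1 ht.2)
    have h2 := h1.sub ((hasDerivAt_id' t).const_mul (μ1 a))
    rwa [mul_one] at h2
  have hcontμ : ContinuousOn μ D := hC2.continuousOn
  have hcontμ1 : ContinuousOn μ1 D := hμ1.continuousOn
  have key : (μ x - μ1 a * x) - (μ a - μ1 a * a) = ∫ t in a..x, (μ1 t - μ1 a) := by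
    rcases le_total a x with hax | hxa
    · rw [intervalIntegral.integral_eq_sub_of_hasDeriv_right_of_le (f' := fun t => μ1 t - μ1 a) hax
        (((hcontμ.mono (Set.Icc_subset_Icc ha.1 hx.2)).sub
          (continuousOn_const.mul (fun y hy => continuousWithinAt_id))))
        (fun t ht => by
          have htD : t ∈ Set.Ioo c d := ⟨lt_of_le_of_lt ha.1 ht.1, lt_of_lt_of_le ht.2 hx.2⟩
          exact (hderiv t htD).hasDerivWithinAt)
        (((hcontμ1.sub continuousOn_const).mono (by
          rw [Set.uIcc_of_le hax]; exact Set.Icc_subset_Icc ha.1 hx.2)).intervalIntegrable)]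
      simp [hμ1def]
    · rw [intervalIntegral.integral_symm,
        intervalIntegral.integral_eq_sub_of_hasDeriv_right_of_le (f' := fun t => μ1 t - μ1 a) hxa
        (((hcontμ.mono (Set.Icc_subset_Icc hx.1 ha.2)).sub
          (continuousOn_const.mul (fun y hy => continuousWithinAt_id))))
        (fun t ht => by
          have htD : t ∈ Set.Ioo c d := ⟨lt_of_le_of_lt hx.1 ht.1, lt_of_lt_of_le ht.2 ha.2⟩
          exact (hderiv t htD).hasDerivWithinAt)
        (((hcontμ1.sub continuousOn_const).mono (by
          rw [Set.uIcc_of_le hxa]; exact Set.Icc_subset_Icc hx.1 ha.2)).intervalIntegrable)]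
      simp [hμ1def]
  have heq : μ x - μ a - μ1 a * (x - a) = ∫ t in a..x, (μ1 t - μ1 a) := by
    rw [← key]; ring
  rw [heq]
  have hbound : ‖∫ t in a..x, (μ1 t - μ1 a)‖ ≤ |∫ t in a..x, L * abs (t - a)| := by
    apply intervalIntegral.norm_integral_le_abs_of_norm_le
    · apply MeasureTheory.ae_restrict_of_forall_mem measurableSet_uIoc
      intro t ht
      have htD : t ∈ D := (Set.uIcc_subset_Icc ha hx) (Set.uIoc_subset_uIcc ht)
      simpa [Real.norm_eq_abs] using hlip a ha t htD
    · exact (continuousOn_const.mul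
        ((continuousOn_id.sub continuousOn_const).abs)).intervalIntegrable
  have hcalc : |∫ t in a..x, L * abs (t - a)| = L / 2 * (x - a) ^ 2 := by
    have h1 : (∫ t in a..x, L * abs (t - a)) = L * ∫ t in a..x, abs (t - a) := by
      rw [intervalIntegral.integral_const_mul]
    have h2 : (∫ t in a..x, abs (t - a)) = ∫ t in (0:ℝ)..(x - a), abs t := by
      simpa using intervalIntegral.integral_comp_sub_right (fun t => |t|) a
    have hLnn : 0 ≤ L := le_trans (abs_nonneg _) (hL a ha)
    rcases le_total a x with hax | hxa
    · have h3 : (∫ t in (0:ℝ)..(x - a), abs t) = (x - a) ^ 2 / 2 := by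
        rw [intervalIntegral.integral_congr (g := fun t => t) (by
          intro t ht
          rw [Set.uIcc_of_le (by linarith : (0:ℝ) ≤ x - a)] at ht
          exact abs_of_nonneg ht.1)]
        rw [integral_id]; ring
      rw [h1, h2, h3, abs_of_nonneg (by positivity)]
      ring
    · have h3 : (∫ t in (0:ℝ)..(x - a), abs t) = -((x - a) ^ 2 / 2) := by
        rw [intervalIntegral.integral_congr (g := fun t => -t) (by
          intro t ht
          rw [Set.uIcc_of_ge (by linarith : x - a ≤ (0:ℝ))] at ht
          exact abs_of_nonpos ht.2)]
        rw [intervalIntegral.integral_neg, integral_id]; ring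
      rw [h1, h2, h3, abs_of_nonpos (by nlinarith [sq_nonneg (x - a)])]
      ring
  calc |∫ t in a..x, (μ1 t - μ1 a)| ≤ |∫ t in a..x, L * abs (t - a)| := by
        simpa [Real.norm_eq_abs] using hbound
    _ = L / 2 * (x - a) ^ 2 := hcalc

lemma bin_bound {c d L : ℝ} {μ f₀ : ℝ → ℝ} (hcd : c < d)
    (hf₀nn : ∀ m, 0 ≤ f₀ m)
    (hf₀int : IntegrableOn f₀ (Set.Icc c d))
    (hμf₀int : IntegrableOn (fun m => μ m * f₀ m) (Set.Icc c d))
    (hmf₀int : IntegrableOn (fun m => m * f₀ m) (Set.Icc c d))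
    (hC2 : ContDiffOn ℝ 2 μ (Set.Icc c d))
    (hL : ∀ m ∈ Set.Icc c d, |iteratedDerivWithin 2 μ (Set.Icc c d) m| ≤ L)
    {g a : ℝ} (hg : g = ∫ m in Set.Icc c d, f₀ m) (hgpos : 0 < g)
    (ha : a = (∫ m in Set.Icc c d, m * f₀ m) / g) :
    |μ a * g - ∫ m in Set.Icc c d, μ m * f₀ m| ≤ L / 8 * ((d - c) ^ 2 * g) := by
  have hLnn : 0 ≤ L := le_trans (abs_nonneg _) (hL c ⟨le_rfl, hcd.le⟩)
  have hms : MeasurableSet (Set.Icc c d) := measurableSet_Icc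
  have hcg : c * g ≤ ∫ m in Set.Icc c d, m * f₀ m := by
    rw [hg, ← integral_const_mul]
    refine setIntegral_mono_on (hf₀int.const_mul c) hmf₀int hms ?_
    intro m hm
    exact mul_le_mul_of_nonneg_right hm.1 (hf₀nn m)
  have hdg : (∫ m in Set.Icc c d, m * f₀ m) ≤ d * g := by
    rw [hg, ← integral_const_mul]
    refine setIntegral_mono_on hmf₀int (hf₀int.const_mul d) hms ?_
    intro m hm
    exact mul_le_mul_of_nonneg_right hm.2 (hf₀nn m)
  have haI : a ∈ Set.Icc c d := by
    rw [ha]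
    constructor
    · rw [le_div_iff₀ hgpos]; linarith
    · rw [div_le_iff₀ hgpos]; linarith
  -- integrability helper
  have hbdd : ∀ (q : ℝ → ℝ) (C : ℝ), Continuous q → (∀ m ∈ Set.Icc c d, |q m| ≤ C) →
      IntegrableOn (fun m => q m * f₀ m) (Set.Icc c d) := by
    intro q C hq hC
    refine Integrable.bdd_mul (c := C) hf₀int hq.aestronglyMeasurable.restrict ?_
    refine MeasureTheory.ae_restrict_of_forall_mem hms fun m hm => ?_
    simpa [Real.norm_eq_abs] using hC m hm
  have habs_le : ∀ m ∈ Set.Icc c d, |m - a| ≤ d - c := by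
    intro m hm
    rw [abs_le]
    constructor <;> [linarith [hm.1, haI.2]; linarith [hm.2, haI.1]]
  have hint1 : IntegrableOn (fun m => (m - a) * f₀ m) (Set.Icc c d) :=
    hbdd _ (d - c) (by fun_prop) habs_le
  have hint2 : IntegrableOn (fun m => (m - a) ^ 2 * f₀ m) (Set.Icc c d) :=
    hbdd _ ((d - c) ^ 2) (by fun_prop) (fun m hm => by
      rw [abs_pow ..]
      exact pow_le_pow_left₀ (abs_nonneg _) (habs_le m hm) 2)
  have hint3 : IntegrableOn (fun m => (m - (c + d) / 2) ^ 2 * f₀ m) (Set.Icc c d) :=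
    hbdd _ ((d - c) ^ 2) (by fun_prop) (fun m hm => by
      rw [abs_pow ..]
      refine pow_le_pow_left₀ (abs_nonneg _) ?_ 2
      rw [abs_le]
      constructor <;> [linarith [hm.1, hm.2]; linarith [hm.1, hm.2]])
  have hag : a * g = ∫ m in Set.Icc c d, m * f₀ m := by
    rw [ha, div_mul_cancel₀ _ (ne_of_gt hgpos)]
  have haf₀int : IntegrableOn (fun m => a * f₀ m) (Set.Icc c d) := hf₀int.const_mul a
  have key0 : (∫ m in Set.Icc c d, (m - a) * f₀ m) = 0 := by
    have h1 : (∫ m in Set.Icc c d, (m * f₀ m - a * f₀ m))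
        = (∫ m in Set.Icc c d, m * f₀ m) - ∫ m in Set.Icc c d, a * f₀ m :=
      integral_sub hmf₀int haf₀int
    have h2 : (∫ m in Set.Icc c d, a * f₀ m) = a * g := by rw [integral_const_mul, ← hg]
    calc (∫ m in Set.Icc c d, (m - a) * f₀ m)
        = ∫ m in Set.Icc c d, (m * f₀ m - a * f₀ m) := by
          congr 1; funext m; ring
      _ = (∫ m in Set.Icc c d, m * f₀ m) - a * g := by rw [h1, h2]
      _ = 0 := by rw [← hag]; ring
  set μ1a := derivWithin μ (Set.Icc c d) a with hμ1a
  have hμaf₀int : IntegrableOn (fun m => μ a * f₀ m) (Set.Icc c d) := hf₀int.const_mul _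
  have hsub1 : IntegrableOn (fun m => μ m * f₀ m - μ a * f₀ m) (Set.Icc c d) :=
    hμf₀int.sub hμaf₀int
  have hmul1 : IntegrableOn (fun m => μ1a * ((m - a) * f₀ m)) (Set.Icc c d) :=
    hint1.const_mul _
  have hTint : IntegrableOn (fun m => (μ m - μ a - μ1a * (m - a)) * f₀ m) (Set.Icc c d) := by
    have : IntegrableOn (fun m => μ m * f₀ m - μ a * f₀ m - μ1a * ((m - a) * f₀ m))
        (Set.Icc c d) := hsub1.sub hmul1
    convert this using 1
    funext m; ring
  have hsplit : (∫ m in Set.Icc c d, μ m * f₀ m) - μ a * g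
      = ∫ m in Set.Icc c d, (μ m - μ a - μ1a * (m - a)) * f₀ m := by
    have e : (∫ m in Set.Icc c d, (μ m - μ a - μ1a * (m - a)) * f₀ m)
        = ∫ m in Set.Icc c d, (μ m * f₀ m - μ a * f₀ m - μ1a * ((m - a) * f₀ m)) := by
      congr 1; funext m; ring
    rw [e, integral_sub hsub1 hmul1, integral_sub hμf₀int hμaf₀int,
      integral_const_mul, integral_const_mul, key0, ← hg]
    ring
  have habs : |∫ m in Set.Icc c d, (μ m - μ a - μ1a * (m - a)) * f₀ m|
      ≤ L / 2 * ∫ m in Set.Icc c d, (m - a) ^ 2 * f₀ m := by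
    rw [← integral_const_mul]
    calc |∫ m in Set.Icc c d, (μ m - μ a - μ1a * (m - a)) * f₀ m|
        ≤ ∫ m in Set.Icc c d, |μ m - μ a - μ1a * (m - a)| * |f₀ m| := by
          simpa [abs_mul] using
            norm_integral_le_integral_norm (fun m => (μ m - μ a - μ1a * (m - a)) * f₀ m)
              (μ := volume.restrict (Set.Icc c d))
      _ ≤ ∫ m in Set.Icc c d, L / 2 * ((m - a) ^ 2 * f₀ m) := by
          refine setIntegral_mono_on (by have h := hTint.abs; simp only [abs_mul] at h; exact h)
            (hint2.const_mul _) hms ?_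
          intro m hm
          rw [abs_of_nonneg (hf₀nn m), ← mul_assoc]
          exact mul_le_mul_of_nonneg_right (taylor_quad hcd hC2 hL haI hm) (hf₀nn m)
  have hvar : (∫ m in Set.Icc c d, (m - a) ^ 2 * f₀ m) ≤ ((d - c) / 2) ^ 2 * g := by
    have hc1 : IntegrableOn (fun m => (2 * (a - (c + d) / 2)) * ((m - a) * f₀ m))
        (Set.Icc c d) := hint1.const_mul _
    have hc2 : IntegrableOn (fun m => (a - (c + d) / 2) ^ 2 * f₀ m) (Set.Icc c d) :=
      hf₀int.const_mul _
    have e2 : (∫ m in Set.Icc c d, (m - (c + d) / 2) ^ 2 * f₀ m)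
        = (∫ m in Set.Icc c d, (m - a) ^ 2 * f₀ m) + (a - (c + d) / 2) ^ 2 * g := by
      have e : (∫ m in Set.Icc c d, (m - (c + d) / 2) ^ 2 * f₀ m)
          = ∫ m in Set.Icc c d, ((m - a) ^ 2 * f₀ m
              + (2 * (a - (c + d) / 2)) * ((m - a) * f₀ m)
              + (a - (c + d) / 2) ^ 2 * f₀ m) := by
        congr 1; funext m; ring
      have hadd1 : IntegrableOn (fun m => (m - a) ^ 2 * f₀ m
          + (2 * (a - (c + d) / 2)) * ((m - a) * f₀ m)) (Set.Icc c d) := hint2.add hc1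
      rw [e, integral_add hadd1 hc2, integral_add hint2 hc1,
        integral_const_mul, integral_const_mul, key0, ← hg]
      ring
    have e1 : (∫ m in Set.Icc c d, (m - (c + d) / 2) ^ 2 * f₀ m) ≤ ((d - c) / 2) ^ 2 * g := by
      rw [hg, ← integral_const_mul]
      refine setIntegral_mono_on hint3 (hf₀int.const_mul _) hms ?_
      intro m hm
      have h1 := hm.1; have h2 := hm.2
      have : (m - (c + d) / 2) ^ 2 ≤ ((d - c) / 2) ^ 2 := by nlinarith
      exact mul_le_mul_of_nonneg_right this (hf₀nn m)
    nlinarith [sq_nonneg (a - (c + d) / 2)]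
  calc |μ a * g - ∫ m in Set.Icc c d, μ m * f₀ m|
      = |∫ m in Set.Icc c d, (μ m - μ a - μ1a * (m - a)) * f₀ m| := by
        rw [abs_sub_comm, hsplit]
    _ ≤ L / 2 * ∫ m in Set.Icc c d, (m - a) ^ 2 * f₀ m := habs
    _ ≤ L / 2 * (((d - c) / 2) ^ 2 * g) := mul_le_mul_of_nonneg_left hvar (by linarith)
    _ = L / 8 * ((d - c) ^ 2 * g) := by ring

/-- Lemma 2: the debiased coarsened functional is within
`(L/8) Σ_k w_k² g_k ≤ L wmax² / 8` of the true functional. -/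
theorem stmt5 (K : ℕ) (c d : Fin K → ℝ) (μ f₀ : ℝ → ℝ) (L wmax : ℝ)
    (hcd : ∀ k, c k ≤ d k) (hw : ∀ k, d k - c k ≤ wmax)
    (hdisj : Pairwise fun i j =>
      Disjoint (Set.Icc (c i) (d i)) (Set.Icc (c j) (d j)))
    (hf₀nn : ∀ m, 0 ≤ f₀ m)
    (hsupp : ∀ m, f₀ m ≠ 0 → m ∈ ⋃ k, Set.Icc (c k) (d k))
    (hf₀int : Integrable f₀)
    (hμf₀int : Integrable (fun m => μ m * f₀ m))
    (hmf₀int : Integrable (fun m => m * f₀ m))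
    (hC2 : ∀ k, ContDiffOn ℝ 2 μ (Set.Icc (c k) (d k)))
    (hL : ∀ k, ∀ m ∈ Set.Icc (c k) (d k),
      |iteratedDerivWithin 2 μ (Set.Icc (c k) (d k)) m| ≤ L)
    (hLnn : 0 ≤ L)
    (g mk : Fin K → ℝ)
    (hg : ∀ k, g k = ∫ m in Set.Icc (c k) (d k), f₀ m)
    (hgpos : ∀ k, 0 < g k) (hgsum : ∑ k, g k = 1)
    (hmk : ∀ k, mk k = (∫ m in Set.Icc (c k) (d k), m * f₀ m) / g k) :
    |∑ k, μ (mk k) * g k - ∫ m, μ m * f₀ m| ≤ (L / 8) * ∑ k, (d k - c k) ^ 2 * g k ∧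
      (L / 8) * ∑ k, (d k - c k) ^ 2 * g k ≤ L * wmax ^ 2 / 8 := by
  -- strict inequality in each bin
  have hcd' : ∀ k, c k < d k := by
    intro k
    rcases lt_or_eq_of_le (hcd k) with h | h
    · exact h
    · exfalso
      have : g k = 0 := by
        rw [hg k, ← h, Set.Icc_self, Measure.restrict_singleton]
        simp
      exact absurd this (ne_of_gt (hgpos k))
  -- decompose the full integral into bins
  have hUeq : (⋃ k, Set.Icc (c k) (d k))
      = ⋃ k ∈ (Finset.univ : Finset (Fin K)), Set.Icc (c k) (d k) := by simp
  have hsum : (∫ m, μ m * f₀ m) = ∑ k, ∫ m in Set.Icc (c k) (d k), μ m * f₀ m := by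
    rw [← setIntegral_eq_integral_of_forall_compl_eq_zero
      (s := ⋃ k, Set.Icc (c k) (d k)) (fun m hm => by
        by_contra h
        exact hm (hsupp m (fun h0 => h (by rw [h0, mul_zero]))))]
    rw [hUeq]
    exact integral_biUnion_finset Finset.univ (fun i _ => measurableSet_Icc)
      (fun i _ j _ hij => hdisj hij) (fun i _ => hμf₀int.integrableOn)
  have hbin : ∀ k, |μ (mk k) * g k - ∫ m in Set.Icc (c k) (d k), μ m * f₀ m|
      ≤ L / 8 * ((d k - c k) ^ 2 * g k) := fun k =>
    bin_bound (hcd' k) hf₀nn hf₀int.integrableOn hμf₀int.integrableOn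
      hmf₀int.integrableOn (hC2 k) (hL k) (hg k) (hgpos k) (hmk k)
  constructor
  · rw [hsum, ← Finset.sum_sub_distrib]
    calc |∑ k, (μ (mk k) * g k - ∫ m in Set.Icc (c k) (d k), μ m * f₀ m)|
        ≤ ∑ k, |μ (mk k) * g k - ∫ m in Set.Icc (c k) (d k), μ m * f₀ m| :=
          Finset.abs_sum_le_sum_abs _ _
      _ ≤ ∑ k, L / 8 * ((d k - c k) ^ 2 * g k) :=
          Finset.sum_le_sum fun k _ => hbin k
      _ = (L / 8) * ∑ k, (d k - c k) ^ 2 * g k := by rw [Finset.mul_sum]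
  · have hterm : ∀ k, (d k - c k) ^ 2 * g k ≤ wmax ^ 2 * g k := by
      intro k
      refine mul_le_mul_of_nonneg_right ?_ (hgpos k).le
      have h0 : 0 ≤ d k - c k := by linarith [hcd k]
      exact pow_le_pow_left₀ h0 (hw k) 2
    calc (L / 8) * ∑ k, (d k - c k) ^ 2 * g k
        ≤ (L / 8) * ∑ k, wmax ^ 2 * g k := by
          refine mul_le_mul_of_nonneg_left (Finset.sum_le_sum fun k _ => hterm k) ?_
          linarith
      _ = L * wmax ^ 2 / 8 := by
          rw [← Finset.mul_sum, hgsum]; ring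
end

section
/- If the support of M is contained in a bounded interval of length S, and the K bins are chosen to each have width S/K, and μ is twice continuously differentiable with |μ''| ≤ L on the support, then the debiased coarsening error satisfies |θ̃ − ∫ μ f₀| ≤ L S² / (8 K²), i.e., it is O(1/K²). -/
open MeasureTheory
open Set

lemma taylor2 {a b L : ℝ} {μ : ℝ → ℝ} (hab : a < b)
    (hC2 : ContDiffOn ℝ 2 μ (Icc a b))
    (hL : ∀ y ∈ Icc a b, |iteratedDerivWithin 2 μ (Icc a b) y| ≤ L)
    {x m : ℝ} (hx : x ∈ Icc a b) (hm : m ∈ Icc a b) :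
    |μ m - μ x - derivWithin μ (Icc a b) x * (m - x)| ≤ L / 2 * (m - x) ^ 2 := by
  set I := Icc a b with hI
  have hUD : UniqueDiffOn ℝ I := uniqueDiffOn_Icc hab
  set d : ℝ → ℝ := derivWithin μ I with hd
  have hdiff : DifferentiableOn ℝ μ I := hC2.differentiableOn (by norm_num)
  have hμd : ∀ y ∈ I, HasDerivWithinAt μ (d y) I y := fun y hy =>
    (hdiff y hy).hasDerivWithinAt
  have hdC1 : ContDiffOn ℝ 1 d I := hC2.derivWithin hUD (by norm_num)
  have hdd : ∀ y ∈ I, HasDerivWithinAt d (iteratedDerivWithin 2 μ I y) I y := by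
    intro y hy
    have h1 : HasDerivWithinAt d (derivWithin d I y) I y :=
      ((hdC1.differentiableOn (by norm_num)) y hy).hasDerivWithinAt
    have h2 : iteratedDerivWithin 2 μ I y = derivWithin d I y := by
      rw [iteratedDerivWithin_succ]
      exact derivWithin_congr (fun z hz => congrFun iteratedDerivWithin_one z)
        (congrFun iteratedDerivWithin_one y)
    rw [h2]; exact h1
  have hLip : ∀ y ∈ I, ∀ z ∈ I, |d y - d z| ≤ L * |y - z| := by
    intro y hy z hz
    have := Convex.norm_image_sub_le_of_norm_hasDerivWithin_le
      (f := d) (f' := fun y => iteratedDerivWithin 2 μ I y) (C := L)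
      hdd (fun w hw => hL w hw) (convex_Icc a b) hz hy
    simpa [Real.norm_eq_abs] using this
  have key : ∀ σ : ℝ, σ = 1 ∨ σ = -1 →
      σ * (μ m - μ x - d x * (m - x)) - L / 2 * (m - x) ^ 2 ≤ 0 := by
    intro σ hσ
    set G : ℝ → ℝ := fun y => σ * (μ y - μ x - d x * (y - x)) - L / 2 * (y - x) ^ 2 with hG
    have hGx : G x = 0 := by simp [hG]
    have hGc : ContinuousOn G I := by
      apply ContinuousOn.sub
      · exact continuousOn_const.mul ((hC2.continuousOn.sub continuousOn_const).sub
          (continuousOn_const.mul (continuousOn_id.sub continuousOn_const)))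
      · fun_prop
    have hGd : ∀ y ∈ Ioo a b, HasDerivAt G (σ * (d y - d x) - L * (y - x)) y := by
      intro y hy
      have hyI : y ∈ I := Ioo_subset_Icc_self hy
      have h1 : HasDerivAt μ (d y) y := (hμd y hyI).hasDerivAt
        (Icc_mem_nhds hy.1 hy.2)
      have h2 := ((((h1.sub_const (μ x)).sub
          (((hasDerivAt_id y).sub_const x).const_mul (d x))).const_mul σ).sub
          ((((hasDerivAt_id y).sub_const x).pow 2).const_mul (L / 2)))
      simp only [id_eq] at h2
      refine h2.congr_deriv ?_
      push_cast; ring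
    have hσabs : ∀ t : ℝ, σ * t ≤ |t| := by
      intro t; rcases hσ with h | h <;> subst h <;>
        simp [le_abs_self, neg_le_abs, neg_mul, one_mul]
    have hσabs2 : ∀ t : ℝ, -|t| ≤ σ * t := by
      intro t; rcases hσ with h | h <;> subst h <;>
        simp only [one_mul, neg_mul]
      · exact neg_abs_le t
      · exact neg_le_neg (le_abs_self t)
    rcases le_or_gt x m with hxm | hmx
    · have hanti : AntitoneOn G (Icc x m) := by
        apply antitoneOn_of_deriv_nonpos (convex_Icc x m)
          (hGc.mono (Icc_subset_Icc hx.1 hm.2))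
        · intro y hy
          rw [interior_Icc] at hy
          have hyo : y ∈ Ioo a b := ⟨lt_of_le_of_lt hx.1 hy.1, lt_of_lt_of_le hy.2 hm.2⟩
          exact (hGd y hyo).differentiableAt.differentiableWithinAt
        · intro y hy
          rw [interior_Icc] at hy
          have hyo : y ∈ Ioo a b := ⟨lt_of_le_of_lt hx.1 hy.1, lt_of_lt_of_le hy.2 hm.2⟩
          rw [(hGd y hyo).deriv]
          have h3 : σ * (d y - d x) ≤ |d y - d x| := hσabs _
          have h4 : |d y - d x| ≤ L * |y - x| := hLip y (Ioo_subset_Icc_self hyo) x hx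
          have h5 : |y - x| = y - x := abs_of_nonneg (by linarith [hy.1])
          rw [h5] at h4
          linarith
      have := hanti (left_mem_Icc.2 hxm) (right_mem_Icc.2 hxm) hxm
      rw [hGx] at this
      exact this
    · have hmono : MonotoneOn G (Icc m x) := by
        apply monotoneOn_of_deriv_nonneg (convex_Icc m x)
          (hGc.mono (Icc_subset_Icc hm.1 hx.2))
        · intro y hy
          rw [interior_Icc] at hy
          have hyo : y ∈ Ioo a b := ⟨lt_of_le_of_lt hm.1 hy.1, lt_of_lt_of_le hy.2 hx.2⟩
          exact (hGd y hyo).differentiableAt.differentiableWithinAt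
        · intro y hy
          rw [interior_Icc] at hy
          have hyo : y ∈ Ioo a b := ⟨lt_of_le_of_lt hm.1 hy.1, lt_of_lt_of_le hy.2 hx.2⟩
          rw [(hGd y hyo).deriv]
          have h3 : -|d y - d x| ≤ σ * (d y - d x) := hσabs2 _
          have h4 : |d y - d x| ≤ L * |y - x| := hLip y (Ioo_subset_Icc_self hyo) x hx
          have h5 : |y - x| = -(y - x) := abs_of_nonpos (by linarith [hy.2])
          rw [h5] at h4
          linarith
      have := hmono (left_mem_Icc.2 hmx.le) (right_mem_Icc.2 hmx.le) hmx.le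
      rw [hGx] at this
      exact this
  have k1 := key 1 (Or.inl rfl)
  have k2 := key (-1) (Or.inr rfl)
  rw [abs_le]
  constructor <;> [linarith; linarith]
open MeasureTheory Set

lemma sum_bins {K : ℕ} (hK : 0 < K) {s₀ S : ℝ} (hS : 0 < S) {h : ℝ → ℝ}
    (hint : Integrable h) (hz : ∀ m, m ∉ Set.Icc s₀ (s₀ + S) → h m = 0) :
    ∑ k : Fin K, ∫ m in Set.Icc (s₀ + (k : ℕ) * (S / K)) (s₀ + ((k : ℕ) + 1) * (S / K)), h m
      = ∫ m, h m := by
  have hK' : (0 : ℝ) < K := by exact_mod_cast hK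
  set p : ℕ → ℝ := fun n => s₀ + n * (S / K) with hp
  have hterm : ∀ n : ℕ, ∫ m in Set.Icc (s₀ + (n : ℝ) * (S / K)) (s₀ + ((n : ℝ) + 1) * (S / K)), h m
      = ∫ x in p n..p (n + 1), h x := by
    intro n
    have e : s₀ + ((n : ℝ) + 1) * (S / K) = p (n + 1) := by
      simp only [hp]; push_cast; ring
    have hle : p n ≤ p (n + 1) := by
      simp only [hp]; push_cast
      have : 0 < S / K := div_pos hS hK'
      nlinarith
    rw [e, intervalIntegral.integral_of_le hle, ← integral_Icc_eq_integral_Ioc]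
  calc ∑ k : Fin K, ∫ m in Set.Icc (s₀ + (k : ℕ) * (S / K)) (s₀ + ((k : ℕ) + 1) * (S / K)), h m
      = ∑ n ∈ Finset.range K, ∫ x in p n..p (n + 1), h x := by
        rw [Fin.sum_univ_eq_sum_range
          (fun n => ∫ m in Set.Icc (s₀ + (n : ℝ) * (S / K)) (s₀ + ((n : ℝ) + 1) * (S / K)), h m)]
        exact Finset.sum_congr rfl fun n _ => hterm n
    _ = ∫ x in (p 0)..(p K), h x :=
        intervalIntegral.sum_integral_adjacent_intervals fun n _ => hint.intervalIntegrable
    _ = ∫ m, h m := by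
        have h0 : p 0 = s₀ := by simp [hp]
        have hKp : p K = s₀ + S := by
          simp only [hp]
          field_simp
        have hle : s₀ ≤ s₀ + S := by linarith
        rw [h0, hKp, intervalIntegral.integral_of_le hle, ← integral_Icc_eq_integral_Ioc]
        exact setIntegral_eq_integral_of_forall_compl_eq_zero hz


/-- Equal-width corollary of Lemma 2: with `K` bins of width `S/K`, the debiased
coarsening error is at most `L S² / (8 K²)`, i.e. `O(1/K²)`. -/
theorem stmt6 (K : ℕ) (hK : 0 < K) (s₀ S : ℝ) (hS : 0 < S)
    (μ f₀ : ℝ → ℝ) (L : ℝ)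
    (B : Fin K → Set ℝ)
    (hB : ∀ k, B k = Set.Icc (s₀ + (k : ℕ) * (S / K)) (s₀ + ((k : ℕ) + 1) * (S / K)))
    (hf₀nn : ∀ m, 0 ≤ f₀ m)
    (hsupp : ∀ m, f₀ m ≠ 0 → m ∈ Set.Icc s₀ (s₀ + S))
    (hf₀int : Integrable f₀) (hf₀1 : ∫ m, f₀ m = 1)
    (hμf₀int : Integrable (fun m => μ m * f₀ m))
    (hmf₀int : Integrable (fun m => m * f₀ m))
    (hC2 : ContDiffOn ℝ 2 μ (Set.Icc s₀ (s₀ + S)))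
    (hL : ∀ m ∈ Set.Icc s₀ (s₀ + S),
      |iteratedDerivWithin 2 μ (Set.Icc s₀ (s₀ + S)) m| ≤ L)
    (g mk : Fin K → ℝ)
    (hg : ∀ k, g k = ∫ m in B k, f₀ m) (hgpos : ∀ k, 0 < g k)
    (hmk : ∀ k, mk k = (∫ m in B k, m * f₀ m) / g k) :
    |∑ k, μ (mk k) * g k - ∫ m, μ m * f₀ m| ≤ L * S ^ 2 / (8 * K ^ 2) := by
  have hK' : (0 : ℝ) < K := by exact_mod_cast hK
  set w : ℝ := S / K with hw
  have hw0 : 0 < w := div_pos hS hK'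
  have hsS : s₀ < s₀ + S := by linarith
  set d : ℝ → ℝ := derivWithin μ (Set.Icc s₀ (s₀ + S)) with hdd
  have hL0 : 0 ≤ L := le_trans (abs_nonneg _) (hL s₀ (Set.left_mem_Icc.2 hsS.le))
  have hf₀zero : ∀ m, m ∉ Set.Icc s₀ (s₀ + S) → f₀ m = 0 := by
    intro m hm; by_contra h; exact hm (hsupp m h)
  have hBdef : ∀ k : Fin K, B k = Set.Icc (s₀ + (k : ℕ) * w) (s₀ + (k : ℕ) * w + w) := by
    intro k; rw [hB k]; congr 1; ring
  have hBsub : ∀ k, B k ⊆ Set.Icc s₀ (s₀ + S) := by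
    intro k; rw [hB k]
    apply Set.Icc_subset_Icc
    · have : (0 : ℝ) ≤ (k : ℕ) * w := by positivity
      rw [hw] at this; linarith
    · have hk1 : ((k : ℕ) : ℝ) + 1 ≤ K := by exact_mod_cast k.isLt
      have h2 : (((k : ℕ) : ℝ) + 1) * (S / K) ≤ K * (S / K) :=
        mul_le_mul_of_nonneg_right hk1 (le_of_lt (by rw [← hw]; exact hw0))
      have hKw : (K : ℝ) * (S / K) = S := by field_simp
      linarith
  have hmeas : ∀ k, MeasurableSet (B k) := fun k => by rw [hB k]; exact measurableSet_Icc
  have hmean : ∀ k, ∫ m in B k, m * f₀ m = mk k * g k := by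
    intro k; rw [hmk k, div_mul_cancel₀ _ (hgpos k).ne']
  -- mk k lies in B k
  have hmk_mem : ∀ k, mk k ∈ B k := by
    intro k
    have hg0 := hgpos k
    have hlow : (s₀ + (k : ℕ) * w) * g k ≤ ∫ m in B k, m * f₀ m := by
      have h1 : ∫ m in B k, (s₀ + (k : ℕ) * w) * f₀ m ≤ ∫ m in B k, m * f₀ m := by
        apply setIntegral_mono_on (hf₀int.integrableOn.const_mul _)
          hmf₀int.integrableOn (hmeas k)
        intro m hm
        have hm' : s₀ + (k : ℕ) * w ≤ m := by rw [hBdef k] at hm; exact hm.1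
        exact mul_le_mul_of_nonneg_right hm' (hf₀nn m)
      rwa [integral_const_mul, ← hg k] at h1
    have hhigh : ∫ m in B k, m * f₀ m ≤ (s₀ + (k : ℕ) * w + w) * g k := by
      have h1 : ∫ m in B k, m * f₀ m ≤ ∫ m in B k, (s₀ + (k : ℕ) * w + w) * f₀ m := by
        apply setIntegral_mono_on hmf₀int.integrableOn
          (hf₀int.integrableOn.const_mul _) (hmeas k)
        intro m hm
        have hm' : m ≤ s₀ + (k : ℕ) * w + w := by rw [hBdef k] at hm; exact hm.2
        exact mul_le_mul_of_nonneg_right hm' (hf₀nn m)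
      rwa [integral_const_mul, ← hg k] at h1
    rw [hBdef k]
    constructor
    · rw [hmk k, le_div_iff₀ hg0]; exact hlow
    · rw [hmk k, div_le_iff₀ hg0]; exact hhigh
  -- Taylor bound on each bin
  have htay : ∀ k, ∀ m ∈ B k,
      |μ m - μ (mk k) - d (mk k) * (m - mk k)| ≤ L / 2 * (m - mk k) ^ 2 :=
    fun k m hm => taylor2 hsS hC2 hL (hBsub k (hmk_mem k)) (hBsub k hm)
  -- integrability of (m - t)^2 * f₀ on B k
  have hsq_int : ∀ (k : Fin K) (t : ℝ),
      IntegrableOn (fun m => (m - t) ^ 2 * f₀ m) (B k) := by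
    intro k t
    have hinner : IntegrableOn (fun m => (m - t) * f₀ m) (B k) := by
      have : (fun m => (m - t) * f₀ m) = fun m => m * f₀ m - t * f₀ m := by
        funext m; ring
      rw [this]
      exact hmf₀int.integrableOn.sub (hf₀int.integrableOn.const_mul _)
    have hb : ∀ᵐ m ∂(volume.restrict (B k)), ‖m - t‖ ≤ |t| + |s₀| + |s₀ + S| := by
      rw [ae_restrict_iff' (hmeas k)]
      apply ae_of_all
      intro m hm
      have hmI := hBsub k hm
      simp only [Set.mem_Icc] at hmI
      have h1 : -|s₀| ≤ s₀ := neg_abs_le s₀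
      have h2 : s₀ + S ≤ |s₀ + S| := le_abs_self _
      have h3 : -|t| ≤ t := neg_abs_le t
      have h4 : t ≤ |t| := le_abs_self t
      rw [Real.norm_eq_abs, abs_le]
      constructor <;> [linarith [abs_nonneg (s₀ + S)]; linarith [abs_nonneg s₀]]
    have := Integrable.bdd_mul (c := |t| + |s₀| + |s₀ + S|) hinner
      ((continuous_id.sub continuous_const).aestronglyMeasurable) hb
    simp only [Pi.sub_apply, id_eq] at this
    have he : (fun m => (m - t) * ((m - t) * f₀ m)) = fun m => (m - t) ^ 2 * f₀ m := by
      funext m; ring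
    rwa [he] at this
  -- per-bin error bound
  have hbin : ∀ k, |μ (mk k) * g k - ∫ m in B k, μ m * f₀ m| ≤ L * w ^ 2 / 8 * g k := by
    intro k
    set x := mk k with hx
    have hxB := hmk_mem k
    have i1 : IntegrableOn (fun m => μ x * f₀ m) (B k) := hf₀int.integrableOn.const_mul _
    have i2 : IntegrableOn (fun m => m * f₀ m) (B k) := hmf₀int.integrableOn
    have i3 : IntegrableOn (fun m => d x * (m * f₀ m)) (B k) := i2.const_mul _
    have i4 : IntegrableOn (fun m => d x * x * f₀ m) (B k) := hf₀int.integrableOn.const_mul _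
    have i5 : IntegrableOn (fun m => μ m * f₀ m) (B k) := hμf₀int.integrableOn
    have i6 : IntegrableOn (fun m => μ m * f₀ m - μ x * f₀ m) (B k) := i5.sub i1
    have i7 : IntegrableOn (fun m => d x * (m * f₀ m) - d x * x * f₀ m) (B k) := i3.sub i4
    have hrw : (fun m => (μ m - μ x - d x * (m - x)) * f₀ m)
        = fun m => (μ m * f₀ m - μ x * f₀ m) - (d x * (m * f₀ m) - d x * x * f₀ m) := by
      funext m; ring
    -- rewrite the error as an integral
    have hid : μ x * g k - ∫ m in B k, μ m * f₀ m
        = -∫ m in B k, (μ m - μ x - d x * (m - x)) * f₀ m := by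
      rw [hrw, integral_sub i6 i7, integral_sub i5 i1, integral_sub i3 i4,
        integral_const_mul, integral_const_mul, integral_const_mul, ← hg k, hmean k, ← hx]
      ring
    rw [hid, abs_neg]
    have hint1 : IntegrableOn (fun m => (μ m - μ x - d x * (m - x)) * f₀ m) (B k) := by
      rw [hrw]; exact i6.sub i7
    have hq : IntegrableOn (fun m => L / 2 * ((m - x) ^ 2 * f₀ m)) (B k) :=
      (hsq_int k x).const_mul _
    have habs : |∫ m in B k, (μ m - μ x - d x * (m - x)) * f₀ m|
        ≤ ∫ m in B k, L / 2 * ((m - x) ^ 2 * f₀ m) := by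
      have h1 := norm_integral_le_integral_norm (μ := volume.restrict (B k))
        (fun m => (μ m - μ x - d x * (m - x)) * f₀ m)
      simp only [Real.norm_eq_abs] at h1
      refine h1.trans ?_
      apply setIntegral_mono_on hint1.abs hq (hmeas k)
      intro m hm
      rw [abs_mul, abs_of_nonneg (hf₀nn m)]
      have := htay k m hm
      have h2 : (0:ℝ) ≤ (m - x) ^ 2 := sq_nonneg _
      nlinarith [hf₀nn m, sq_nonneg (m - x)]
    -- variance bound
    set c : ℝ := s₀ + (k : ℕ) * w + w / 2 with hc
    have hvar : ∫ m in B k, (m - x) ^ 2 * f₀ m ≤ (w / 2) ^ 2 * g k := by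
      have hrw : (fun m => (m - x) ^ 2 * f₀ m)
          = fun m => (m - c) ^ 2 * f₀ m
              - (((x - c) ^ 2 - 2 * (x - c) * x) * f₀ m + (2 * (x - c)) * (m * f₀ m)) := by
        funext m; ring
      have j1 : IntegrableOn (fun m => (m - c) ^ 2 * f₀ m) (B k) := hsq_int k c
      have j2 : IntegrableOn (fun m => ((x - c) ^ 2 - 2 * (x - c) * x) * f₀ m) (B k) :=
        hf₀int.integrableOn.const_mul _
      have j3 : IntegrableOn (fun m => 2 * (x - c) * (m * f₀ m)) (B k) := i2.const_mul _
      have j4 : IntegrableOn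
          (fun m => ((x - c) ^ 2 - 2 * (x - c) * x) * f₀ m + 2 * (x - c) * (m * f₀ m)) (B k) :=
        j2.add j3
      have e1 : ∫ m in B k, (m - x) ^ 2 * f₀ m
          = (∫ m in B k, (m - c) ^ 2 * f₀ m) - ((x - c) ^ 2 - 2 * (x - c) * x) * g k
            - 2 * (x - c) * (x * g k) := by
        rw [hrw, integral_sub j1 j4, integral_add j2 j3,
          integral_const_mul, integral_const_mul, ← hg k, hmean k, ← hx]
        ring
      have e2 : ∫ m in B k, (m - c) ^ 2 * f₀ m ≤ (w / 2) ^ 2 * g k := by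
        have h1 : ∫ m in B k, (m - c) ^ 2 * f₀ m ≤ ∫ m in B k, (w / 2) ^ 2 * f₀ m := by
          apply setIntegral_mono_on (hsq_int k c) (hf₀int.integrableOn.const_mul _) (hmeas k)
          intro m hm
          rw [hBdef k] at hm
          have h2 : |m - c| ≤ w / 2 := by
            rw [abs_le, hc]; constructor <;> [linarith [hm.1]; linarith [hm.2]]
          have h3 : (m - c) ^ 2 ≤ (w / 2) ^ 2 :=
            sq_le_sq' (abs_le.1 h2).1 (abs_le.1 h2).2
          exact mul_le_mul_of_nonneg_right h3 (hf₀nn m)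
        rwa [integral_const_mul, ← hg k] at h1
      have h4 : (0:ℝ) ≤ (x - c) ^ 2 * g k := mul_nonneg (sq_nonneg _) (hgpos k).le
      have e3 : ∫ m in B k, (m - x) ^ 2 * f₀ m
          = (∫ m in B k, (m - c) ^ 2 * f₀ m) - (x - c) ^ 2 * g k := by
        rw [e1]; ring
      linarith
    calc |∫ m in B k, (μ m - μ x - d x * (m - x)) * f₀ m|
        ≤ ∫ m in B k, L / 2 * ((m - x) ^ 2 * f₀ m) := habs
      _ = L / 2 * ∫ m in B k, (m - x) ^ 2 * f₀ m := integral_const_mul _ _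
      _ ≤ L / 2 * ((w / 2) ^ 2 * g k) := by
          apply mul_le_mul_of_nonneg_left hvar (by linarith)
      _ = L * w ^ 2 / 8 * g k := by ring
  -- assemble
  have hsum1 : ∑ k, g k = 1 := by
    have : ∑ k : Fin K, g k
        = ∑ k : Fin K, ∫ m in Set.Icc (s₀ + (k : ℕ) * (S / K)) (s₀ + ((k : ℕ) + 1) * (S / K)), f₀ m := by
      apply Finset.sum_congr rfl
      intro k _; rw [hg k, hB k]
    rw [this, sum_bins hK hS hf₀int hf₀zero, hf₀1]
  have hsum2 : ∑ k, ∫ m in B k, μ m * f₀ m = ∫ m, μ m * f₀ m := by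
    have hz : ∀ m, m ∉ Set.Icc s₀ (s₀ + S) → μ m * f₀ m = 0 := by
      intro m hm; rw [hf₀zero m hm, mul_zero]
    have : ∑ k : Fin K, (∫ m in B k, μ m * f₀ m)
        = ∑ k : Fin K, ∫ m in Set.Icc (s₀ + (k : ℕ) * (S / K)) (s₀ + ((k : ℕ) + 1) * (S / K)),
            μ m * f₀ m := by
      apply Finset.sum_congr rfl
      intro k _; rw [hB k]
    rw [this, sum_bins hK hS hμf₀int hz]
  calc |∑ k, μ (mk k) * g k - ∫ m, μ m * f₀ m|
      = |∑ k, (μ (mk k) * g k - ∫ m in B k, μ m * f₀ m)| := by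
        rw [Finset.sum_sub_distrib, hsum2]
    _ ≤ ∑ k, |μ (mk k) * g k - ∫ m in B k, μ m * f₀ m| :=
        Finset.abs_sum_le_sum_abs _ _
    _ ≤ ∑ k, L * w ^ 2 / 8 * g k := Finset.sum_le_sum fun k _ => hbin k
    _ = L * w ^ 2 / 8 := by rw [← Finset.mul_sum, hsum1, mul_one]
    _ = L * S ^ 2 / (8 * K ^ 2) := by
        rw [hw]
        ring
end

section
/- Under the setup of the naive coarsening error with bounded support of length S, equal-width bins of width S/K, and |μ'| ≤ L on the support, the naive coarsening error satisfies |Σ_k μ_k(1) g_k(0) − ∫ μ f₀| ≤ L S / K, i.e., it is O(1/K). -/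
open MeasureTheory

lemma stmt7_sum_parts (K : ℕ) (hK : 0 < K) (s₀ S : ℝ) (hS : 0 < S)
    (f : ℝ → ℝ) (hf : Integrable f)
    (h0 : ∀ m, m ∉ Set.Icc s₀ (s₀ + S) → f m = 0) :
    ∑ k : Fin K, ∫ m in Set.Icc (s₀ + (k : ℕ) * (S / K)) (s₀ + ((k : ℕ) + 1) * (S / K)), f m
      = ∫ m, f m := by
  have hKne : (K : ℝ) ≠ 0 := Nat.cast_ne_zero.mpr hK.ne'
  have hhpos : 0 < S / K := div_pos hS (Nat.cast_pos.mpr hK)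
  set a : ℕ → ℝ := fun i => s₀ + i * (S / K) with ha
  have hmono : ∀ i : ℕ, a i ≤ a (i+1) := by
    intro i; simp only [ha]; push_cast; nlinarith [hhpos.le]
  have haK : a K = s₀ + S := by
    simp only [ha]; rw [mul_div_cancel₀ _ hKne]
  have ha0 : a 0 = s₀ := by simp [ha]
  have key : ∀ i : ℕ, ∫ m in Set.Icc (a i) (a (i+1)), f m = ∫ m in (a i)..(a (i+1)), f m := by
    intro i
    rw [intervalIntegral.integral_of_le (hmono i), integral_Icc_eq_integral_Ioc]
  calc ∑ k : Fin K, ∫ m in Set.Icc (s₀ + (k:ℕ)*(S/K)) (s₀ + ((k:ℕ)+1)*(S/K)), f m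
      = ∑ i ∈ Finset.range K, ∫ m in (a i)..(a (i+1)), f m := by
        rw [← Fin.sum_univ_eq_sum_range (fun i => ∫ m in (a i)..(a (i+1)), f m) K]
        refine Finset.sum_congr rfl fun i _ => ?_
        rw [← key i]
        congr 2 <;> simp only [ha] <;> push_cast <;> ring
    _ = ∫ m in (a 0)..(a K), f m :=
        intervalIntegral.sum_integral_adjacent_intervals fun i _ => hf.intervalIntegrable
    _ = ∫ m, f m := by
        rw [ha0, haK, intervalIntegral.integral_of_le (by linarith),
          ← integral_Icc_eq_integral_Ioc]
        exact setIntegral_eq_integral_of_forall_compl_eq_zero h0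

/-- Equal-width corollary of Lemma 1: with `K` bins of width `S/K` and `|μ'| ≤ L`,
the naive coarsening error is at most `L S / K`, i.e. `O(1/K)`. -/
theorem stmt7 (K : ℕ) (hK : 0 < K) (s₀ S : ℝ) (hS : 0 < S)
    (μ μ' f₀ f₁ : ℝ → ℝ) (L : ℝ)
    (B : Fin K → Set ℝ)
    (hB : ∀ k, B k = Set.Icc (s₀ + (k : ℕ) * (S / K)) (s₀ + ((k : ℕ) + 1) * (S / K)))
    (hf₀nn : ∀ m, 0 ≤ f₀ m) (hf₁nn : ∀ m, 0 ≤ f₁ m)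
    (hsupp : ∀ m, f₀ m ≠ 0 → m ∈ Set.Icc s₀ (s₀ + S))
    (hf₀int : Integrable f₀) (hf₀1 : ∫ m, f₀ m = 1)
    (hμf₀int : Integrable (fun m => μ m * f₀ m))
    (hmf₀int : Integrable (fun m => m * f₀ m))
    (hf₁bin : ∀ k, IntegrableOn f₁ (B k))
    (hμf₁bin : ∀ k, IntegrableOn (fun m => μ m * f₁ m) (B k))
    (hmf₁bin : ∀ k, IntegrableOn (fun m => m * f₁ m) (B k))
    (hderiv : ∀ m ∈ Set.Icc s₀ (s₀ + S), HasDerivAt μ (μ' m) m ∧ |μ' m| ≤ L)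
    (hLnn : 0 ≤ L)
    (g₀ g₁ μk1 : Fin K → ℝ)
    (hg₀ : ∀ k, g₀ k = ∫ m in B k, f₀ m) (hg₀pos : ∀ k, 0 < g₀ k)
    (hg₁ : ∀ k, g₁ k = ∫ m in B k, f₁ m) (hg₁pos : ∀ k, 0 < g₁ k)
    (hμk1 : ∀ k, μk1 k = (∫ m in B k, μ m * f₁ m) / g₁ k) :
    |∑ k, μk1 k * g₀ k - ∫ m, μ m * f₀ m| ≤ L * S / K := by
  have hKne : (K : ℝ) ≠ 0 := Nat.cast_ne_zero.mpr hK.ne'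
  have hKpos : (0:ℝ) < K := Nat.cast_pos.mpr hK
  have hhpos : 0 < S / K := div_pos hS hKpos
  set I : Set ℝ := Set.Icc s₀ (s₀ + S) with hI
  -- Lipschitz estimate on I
  have hlip : ∀ x ∈ I, ∀ y ∈ I, |μ y - μ x| ≤ L * |y - x| := by
    intro x hx y hy
    have := Convex.norm_image_sub_le_of_norm_hasDerivWithin_le
      (f := μ) (f' := μ') (s := I) (C := L)
      (fun m hm => (hderiv m hm).1.hasDerivWithinAt)
      (fun m hm => by simpa [Real.norm_eq_abs] using (hderiv m hm).2)
      (convex_Icc _ _) hx hy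
    simpa [Real.norm_eq_abs] using this
  have hcont : ContinuousOn μ I := fun x hx =>
    ((hderiv x hx).1.continuousAt).continuousWithinAt
  -- bins are inside I
  have hBI : ∀ k : Fin K, B k ⊆ I := by
    intro k
    rw [hB k, hI]
    apply Set.Icc_subset_Icc
    · nlinarith [hhpos.le, (Nat.cast_nonneg k.1 : (0:ℝ) ≤ k.1)]
    · have hk1 : ((k:ℕ):ℝ) + 1 ≤ K := by
        have := k.2; push_cast
        exact_mod_cast Nat.succ_le_of_lt this
      have : (((k:ℕ):ℝ) + 1) * (S / K) ≤ K * (S / K) :=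
        mul_le_mul_of_nonneg_right hk1 hhpos.le
      rw [mul_div_cancel₀ _ hKne] at this
      linarith
  -- per-bin estimate
  have hbin : ∀ k : Fin K,
      |μk1 k * g₀ k - ∫ m in B k, μ m * f₀ m| ≤ L * (S / K) * g₀ k := by
    intro k
    set aL := s₀ + ((k:ℕ):ℝ) * (S / K) with haL
    set aR := s₀ + (((k:ℕ):ℝ) + 1) * (S / K) with haR
    have hle : aL ≤ aR := by rw [haL, haR]; nlinarith [hhpos.le]
    have hBk : B k = Set.Icc aL aR := hB k
    have hmeas : MeasurableSet (B k) := by rw [hBk]; exact measurableSet_Icc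
    have hcpt : IsCompact (B k) := by rw [hBk]; exact isCompact_Icc
    have hne : (B k).Nonempty := by rw [hBk]; exact Set.nonempty_Icc.mpr hle
    have hcontB : ContinuousOn μ (B k) := hcont.mono (hBI k)
    obtain ⟨p, hpB, hp⟩ := hcpt.exists_isMaxOn hne hcontB
    obtain ⟨q, hqB, hq⟩ := hcpt.exists_isMinOn hne hcontB
    -- oscillation bound
    have hpq : μ p - μ q ≤ L * (S / K) := by
      have h1 : |μ p - μ q| ≤ L * |p - q| := hlip q (hBI k hqB) p (hBI k hpB)
      have h2 : |p - q| ≤ S / K := by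
        rw [hBk] at hpB hqB
        rw [abs_sub_le_iff]
        constructor <;> [skip; skip] <;>
          · have := hpB.1; have := hpB.2; have := hqB.1; have := hqB.2
            simp only [haL, haR] at *
            linarith
      calc μ p - μ q ≤ |μ p - μ q| := le_abs_self _
        _ ≤ L * |p - q| := h1
        _ ≤ L * (S / K) := mul_le_mul_of_nonneg_left h2 hLnn
    -- averages lie between μ q and μ p
    have avg_bound : ∀ (f : ℝ → ℝ), (∀ m, 0 ≤ f m) → IntegrableOn f (B k) →
        IntegrableOn (fun m => μ m * f m) (B k) →
        μ q * ∫ m in B k, f m ≤ (∫ m in B k, μ m * f m) ∧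
        (∫ m in B k, μ m * f m) ≤ μ p * ∫ m in B k, f m := by
      intro f hfnn hfi hμfi
      constructor
      · have : ∫ m in B k, μ q * f m ≤ ∫ m in B k, μ m * f m := by
          apply setIntegral_mono_on (hfi.const_mul _) hμfi hmeas
          intro m hm
          exact mul_le_mul_of_nonneg_right (hq hm) (hfnn m)
        simpa [integral_const_mul] using this
      · have : ∫ m in B k, μ m * f m ≤ ∫ m in B k, μ p * f m := by
          apply setIntegral_mono_on hμfi (hfi.const_mul _) hmeas
          intro m hm
          exact mul_le_mul_of_nonneg_right (hp hm) (hfnn m)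
        simpa [integral_const_mul] using this
    obtain ⟨h1l, h1r⟩ := avg_bound f₁ hf₁nn (hf₁bin k) (hμf₁bin k)
    obtain ⟨h0l, h0r⟩ := avg_bound f₀ hf₀nn hf₀int.integrableOn hμf₀int.integrableOn
    rw [← hg₁ k] at h1l h1r
    rw [← hg₀ k] at h0l h0r
    have hμk1b : μ q ≤ μk1 k ∧ μk1 k ≤ μ p := by
      rw [hμk1 k]
      constructor
      · rw [le_div_iff₀ (hg₁pos k)]; linarith
      · rw [div_le_iff₀ (hg₁pos k)]; linarith
    have : |μk1 k * g₀ k - ∫ m in B k, μ m * f₀ m| ≤ (μ p - μ q) * g₀ k := by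
      rw [abs_le]
      constructor
      · nlinarith [hμk1b.1, hμk1b.2, (hg₀pos k).le, h0r]
      · nlinarith [hμk1b.1, hμk1b.2, (hg₀pos k).le, h0l]
    calc |μk1 k * g₀ k - ∫ m in B k, μ m * f₀ m| ≤ (μ p - μ q) * g₀ k := this
      _ ≤ L * (S / K) * g₀ k := mul_le_mul_of_nonneg_right hpq (hg₀pos k).le
  -- decomposition of the full integral
  have hsupp' : ∀ m, m ∉ I → f₀ m = 0 := by
    intro m hm; by_contra h; exact hm (hsupp m h)
  have hdecomp : ∑ k, ∫ m in B k, μ m * f₀ m = ∫ m, μ m * f₀ m := by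
    have := stmt7_sum_parts K hK s₀ S hS (fun m => μ m * f₀ m) hμf₀int
      (fun m hm => by show μ m * f₀ m = 0; rw [hsupp' m hm, mul_zero])
    rw [← this]
    exact Finset.sum_congr rfl fun k _ => by rw [hB k]
  have hsum1 : ∑ k, g₀ k = 1 := by
    have := stmt7_sum_parts K hK s₀ S hS f₀ hf₀int hsupp'
    rw [← hf₀1, ← this]
    exact Finset.sum_congr rfl fun k _ => by rw [hg₀ k, hB k]
  rw [← hdecomp, ← Finset.sum_sub_distrib]
  calc |∑ k, (μk1 k * g₀ k - ∫ m in B k, μ m * f₀ m)|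
      ≤ ∑ k, |μk1 k * g₀ k - ∫ m in B k, μ m * f₀ m| := Finset.abs_sum_le_sum_abs _ _
    _ ≤ ∑ k, L * (S / K) * g₀ k := Finset.sum_le_sum fun k _ => hbin k
    _ = L * (S / K) * ∑ k, g₀ k := by rw [Finset.mul_sum]
    _ = L * S / K := by rw [hsum1, mul_one, mul_div_assoc]
end

section
/- Let μ: B → ℝ be continuously differentiable on an interval B, and let m₀, m₁ ∈ B with m₁ = E_{f₁}[M | M ∈ B] and m₀ = E_{f₀}[M | M ∈ B] for two conditional distributions on B. Assume μ is twice continuously differentiable with |μ''| ≤ L on B and B has width w. Then E_{f₁}[μ(M)|M∈B] − E_{f₀}[μ(M)|M∈B] = μ'(m₁)(m₁ − m₀) + R with |R| ≤ L w². -/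
open MeasureTheory Set

lemma taylor1_bound {c d L : ℝ} (hcd : c ≤ d) {μ : ℝ → ℝ}
    (hC2 : ContDiffOn ℝ 2 μ (Set.Icc c d))
    (hL : ∀ m ∈ Set.Icc c d, |iteratedDerivWithin 2 μ (Set.Icc c d) m| ≤ L)
    {x y : ℝ} (hx : x ∈ Set.Icc c d) (hy : y ∈ Set.Icc c d) :
    |μ y - μ x - derivWithin μ (Set.Icc c d) x * (y - x)| ≤ L / 2 * (y - x) ^ 2 := by
  rcases eq_or_lt_of_le hcd with rfl | hlt
  · have hxc : x = c := le_antisymm hx.2 hx.1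
    have hyc : y = c := le_antisymm hy.2 hy.1
    subst hxc; subst hyc; simp
  set s := Set.Icc c d with hs
  have hus : UniqueDiffOn ℝ s := uniqueDiffOn_Icc hlt
  set F : ℝ → ℝ := derivWithin μ s with hF
  have hd1 : DifferentiableOn ℝ μ s := hC2.differentiableOn (by simp)
  have hderiv : ∀ z ∈ s, HasDerivWithinAt μ (F z) s z :=
    fun z hz => (hd1 z hz).hasDerivWithinAt
  have hd2' : DifferentiableOn ℝ (iteratedDerivWithin 1 μ s) s :=
    hC2.differentiableOn_iteratedDerivWithin (m := 1) (by norm_num) hus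
  have hd2 : DifferentiableOn ℝ F s := by
    intro z hz
    exact (hd2' z hz).congr (fun w hw => (congrFun iteratedDerivWithin_one w).symm)
      (congrFun iteratedDerivWithin_one z).symm
  have hbound2 : ∀ z ∈ s, ‖derivWithin F s z‖ ≤ L := by
    intro z hz
    have h2 : iteratedDerivWithin 2 μ s z = derivWithin F s z := by
      rw [show (2:ℕ) = 1 + 1 from rfl, iteratedDerivWithin_succ]
      exact derivWithin_congr (fun w hw => congrFun iteratedDerivWithin_one w)
        (congrFun iteratedDerivWithin_one z)
    rw [Real.norm_eq_abs, ← h2]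
    exact hL z hz
  have hLip : ∀ z ∈ s, ∀ w ∈ s, |F w - F z| ≤ L * |w - z| := by
    intro z hz w hw
    have := (convex_Icc c d).norm_image_sub_le_of_norm_hasDerivWithin_le
      (f := F) (f' := fun u => derivWithin F s u)
      (fun u hu => (hd2 u hu).hasDerivWithinAt) hbound2 hz hw
    simpa [Real.norm_eq_abs] using this
  -- parametrize the segment
  set φ : ℝ → ℝ := fun t => x + t * (y - x) with hφ
  have hmaps : ∀ t ∈ Set.Icc (0:ℝ) 1, φ t ∈ s := by
    intro t ht
    have := (convex_Icc c d).add_smul_sub_mem hx hy ht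
    simpa [smul_eq_mul, hφ, hs] using this
  set g : ℝ → ℝ := fun t => μ (φ t) - μ x - t * (F x * (y - x)) with hg
  have hA : ∀ t ∈ Set.Icc (0:ℝ) 1,
      HasDerivWithinAt g ((F (φ t) - F x) * (y - x)) (Set.Icc (0:ℝ) 1) t := by
    intro t ht
    have hφd : HasDerivWithinAt φ (y - x) (Set.Icc (0:ℝ) 1) t := by
      simpa [hφ] using (((hasDerivAt_id t).mul_const (y - x)).const_add x).hasDerivWithinAt
    have hcomp : HasDerivWithinAt (fun t => μ (φ t)) (F (φ t) * (y - x))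
        (Set.Icc (0:ℝ) 1) t :=
      (hderiv (φ t) (hmaps t ht)).comp t hφd hmaps
    have := (hcomp.sub_const (μ x)).sub
      (((hasDerivAt_id t).mul_const (F x * (y - x))).hasDerivWithinAt)
    exact this.congr_deriv (by ring)
  have hcont : ContinuousOn g (Set.Icc (0:ℝ) 1) :=
    fun t ht => (hA t ht).continuousWithinAt
  have key := image_norm_le_of_norm_deriv_right_le_deriv_boundary (a := 0) (b := 1)
    (f := g) (f' := fun t => (F (φ t) - F x) * (y - x))
    (B := fun t => L / 2 * t ^ 2 * (y - x) ^ 2)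
    (B' := fun t => L * t * (y - x) ^ 2)
    hcont
    (fun t ht => by
      refine (hA t (Ico_subset_Icc_self ht)).mono_of_mem_nhdsWithin ?_
      rw [mem_nhdsWithin]
      exact ⟨Set.Iio 1, isOpen_Iio, ht.2, fun z hz => ⟨le_trans ht.1 hz.2, le_of_lt hz.1⟩⟩)
    (by simp [hg, hφ])
    (fun t => by
      have : HasDerivAt (fun t : ℝ => L / 2 * t ^ 2 * (y - x) ^ 2)
          (L / 2 * (2 * t) * (y - x) ^ 2) t := by
        exact (((hasDerivAt_pow 2 t).const_mul (L / 2)).mul_const ((y - x) ^ 2)).congr_deriv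
          (by ring)
      convert this using 1; ring)
    (fun t ht => by
      have h1 : |F (φ t) - F x| ≤ L * |t * (y - x)| := by
        have := hLip x hx (φ t) (hmaps t (Ico_subset_Icc_self ht))
        simpa [hφ, add_sub_cancel_left] using this
      have h2 : ‖(F (φ t) - F x) * (y - x)‖ ≤ L * |t * (y - x)| * |y - x| := by
        rw [Real.norm_eq_abs, abs_mul]
        exact mul_le_mul_of_nonneg_right h1 (abs_nonneg _)
      refine h2.trans (le_of_eq ?_)
      rw [abs_mul, abs_of_nonneg ht.1]
      show L * (t * |y - x|) * |y - x| = L * t * (y - x) ^ 2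
      rw [← sq_abs (y - x)]
      ring)
  have := key (right_mem_Icc.2 zero_le_one)
  have hg1 : g 1 = μ y - μ x - F x * (y - x) := by
    simp only [hg, hφ]
    norm_num
  rw [hg1, Real.norm_eq_abs] at this
  simpa using this

lemma integrable_on_box {c d : ℝ} (ν : Measure ℝ) [IsProbabilityMeasure ν]
    (h : ν (Set.Icc c d)ᶜ = 0) {μ : ℝ → ℝ} (hc : ContinuousOn μ (Set.Icc c d)) :
    Integrable μ ν := by
  have hae : ∀ᵐ m ∂ν, m ∈ Set.Icc c d := by
    rw [ae_iff]
    rw [show {m : ℝ | ¬ m ∈ Set.Icc c d} = (Set.Icc c d)ᶜ from rfl]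
    exact h
  have hrestr : ν.restrict (Set.Icc c d) = ν :=
    Measure.restrict_eq_self_of_ae_mem hae
  have hmeas : AEStronglyMeasurable μ ν := by
    rw [← hrestr]; exact hc.aestronglyMeasurable measurableSet_Icc
  obtain ⟨C, hC⟩ := isCompact_Icc.exists_bound_of_continuousOn hc
  exact (integrable_const C).mono' hmeas (hae.mono fun m hm => hC m hm)

/-- Equation (6): first-order expansion of the within-bin bias with
second-order remainder. -/
theorem stmt8 (c d L : ℝ) (hcd : c ≤ d)
    (ν₀ ν₁ : Measure ℝ) [IsProbabilityMeasure ν₀] [IsProbabilityMeasure ν₁]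
    (h₀ : ν₀ (Set.Icc c d)ᶜ = 0) (h₁ : ν₁ (Set.Icc c d)ᶜ = 0)
    (m₀ m₁ : ℝ) (hm₀ : m₀ = ∫ m, m ∂ν₀) (hm₁ : m₁ = ∫ m, m ∂ν₁)
    (μ : ℝ → ℝ) (hC2 : ContDiffOn ℝ 2 μ (Set.Icc c d))
    (hL : ∀ m ∈ Set.Icc c d, |iteratedDerivWithin 2 μ (Set.Icc c d) m| ≤ L) :
    ∃ R : ℝ,
      (∫ m, μ m ∂ν₁) - (∫ m, μ m ∂ν₀)
        = derivWithin μ (Set.Icc c d) m₁ * (m₁ - m₀) + R ∧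
      |R| ≤ L * (d - c) ^ 2 := by
  have hae₀ : ∀ᵐ m ∂ν₀, m ∈ Set.Icc c d := by
    rw [ae_iff]
    rw [show {m : ℝ | ¬ m ∈ Set.Icc c d} = (Set.Icc c d)ᶜ from rfl]
    exact h₀
  have hae₁ : ∀ᵐ m ∂ν₁, m ∈ Set.Icc c d := by
    rw [ae_iff]
    rw [show {m : ℝ | ¬ m ∈ Set.Icc c d} = (Set.Icc c d)ᶜ from rfl]
    exact h₁
  have hintμ₀ : Integrable μ ν₀ := integrable_on_box ν₀ h₀ hC2.continuousOn
  have hintμ₁ : Integrable μ ν₁ := integrable_on_box ν₁ h₁ hC2.continuousOn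
  have hintid₀ : Integrable (fun m : ℝ => m) ν₀ :=
    integrable_on_box ν₀ h₀ continuousOn_id
  have hintid₁ : Integrable (fun m : ℝ => m) ν₁ :=
    integrable_on_box ν₁ h₁ continuousOn_id
  -- the means lie in the interval
  have hmean : ∀ (ν : Measure ℝ) [IsProbabilityMeasure ν],
      (∀ᵐ m ∂ν, m ∈ Set.Icc c d) → Integrable (fun m : ℝ => m) ν →
      (∫ m, m ∂ν) ∈ Set.Icc c d := by
    intro ν _ hae hint
    constructor
    · have := integral_mono_ae (integrable_const c) hint (hae.mono fun m hm => hm.1)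
      simpa using this
    · have := integral_mono_ae hint (integrable_const d) (hae.mono fun m hm => hm.2)
      simpa using this
  have hm₁mem : m₁ ∈ Set.Icc c d := hm₁ ▸ hmean ν₁ hae₁ hintid₁
  have hL0 : 0 ≤ L := le_trans (abs_nonneg _) (hL c ⟨le_refl c, hcd⟩)
  set F := derivWithin μ (Set.Icc c d) m₁ with hFdef
  set r : ℝ → ℝ := fun m => μ m - μ m₁ - F * (m - m₁) with hrdef
  have hrbound : ∀ m ∈ Set.Icc c d, |r m| ≤ L / 2 * (d - c) ^ 2 := by
    intro m hm
    refine (taylor1_bound hcd hC2 hL hm₁mem hm).trans ?_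
    have habs : |m - m₁| ≤ d - c := by
      rw [abs_sub_le_iff]
      constructor <;> linarith [hm.1, hm.2, hm₁mem.1, hm₁mem.2]
    have : (m - m₁) ^ 2 ≤ (d - c) ^ 2 := by
      rw [← sq_abs (m - m₁)]
      exact pow_le_pow_left₀ (abs_nonneg _) habs 2
    nlinarith
  have hintr : ∀ (ν : Measure ℝ) [IsProbabilityMeasure ν],
      Integrable μ ν → Integrable (fun m : ℝ => m) ν → Integrable r ν := by
    intro ν _ h1 h2
    exact (h1.sub (integrable_const (μ m₁))).sub ((h2.sub (integrable_const m₁)).const_mul F)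
  have hintr₀ := hintr ν₀ hintμ₀ hintid₀
  have hintr₁ := hintr ν₁ hintμ₁ hintid₁
  have hsplit : ∀ (ν : Measure ℝ) [IsProbabilityMeasure ν],
      Integrable μ ν → Integrable (fun m : ℝ => m) ν →
      (∫ m, r m ∂ν) = (∫ m, μ m ∂ν) - μ m₁ - F * ((∫ m, m ∂ν) - m₁) := by
    intro ν _ h1 h2
    have hA : Integrable (fun m : ℝ => μ m - μ m₁) ν := h1.sub (integrable_const _)
    have hB : Integrable (fun m : ℝ => F * (m - m₁)) ν :=
      (h2.sub (integrable_const m₁)).const_mul F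
    have h1' : Integrable (fun m : ℝ => μ m) ν := h1
    have e : (∫ m, r m ∂ν) = ∫ m, ((μ m - μ m₁) - F * (m - m₁)) ∂ν := rfl
    rw [e, integral_sub hA hB, integral_sub h1' (integrable_const (μ m₁)),
      integral_const_mul, integral_sub h2 (integrable_const m₁)]
    simp
  refine ⟨(∫ m, r m ∂ν₁) - (∫ m, r m ∂ν₀), ?_, ?_⟩
  · have e₁ := hsplit ν₁ hintμ₁ hintid₁
    have e₀ := hsplit ν₀ hintμ₀ hintid₀
    rw [← hm₁] at e₁
    rw [← hm₀] at e₀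
    have : (∫ m, μ m ∂ν₁) = μ m₁ + (∫ m, r m ∂ν₁) := by rw [e₁]; ring
    have h0' : (∫ m, μ m ∂ν₀) = μ m₁ + F * (m₀ - m₁) + (∫ m, r m ∂ν₀) := by
      rw [e₀]; ring
    rw [this, h0']; ring
  · have hb : ∀ (ν : Measure ℝ) [IsProbabilityMeasure ν],
        (∀ᵐ m ∂ν, m ∈ Set.Icc c d) →
        |∫ m, r m ∂ν| ≤ L / 2 * (d - c) ^ 2 := by
      intro ν _ hae
      have := norm_integral_le_of_norm_le_const (μ := ν) (f := r)
        (C := L / 2 * (d - c) ^ 2) (hae.mono fun m hm => by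
          simpa [Real.norm_eq_abs] using hrbound m hm)
      simpa [Real.norm_eq_abs, measure_univ] using this
    calc |(∫ m, r m ∂ν₁) - (∫ m, r m ∂ν₀)|
        ≤ |∫ m, r m ∂ν₁| + |∫ m, r m ∂ν₀| := abs_sub _ _
      _ ≤ L / 2 * (d - c) ^ 2 + L / 2 * (d - c) ^ 2 := add_le_add (hb ν₁ hae₁) (hb ν₀ hae₀)
      _ = L * (d - c) ^ 2 := by ring
end

section
/- Combining the binning and smoothing errors: if μ is twice continuously differentiable with uniformly bounded second derivative, bins are intervals of width at most w_max, and the kernel and density satisfy the smoothing-bias hypotheses at each within-bin mean m_k(0), then the smoothed debiased coarsened functional θ̃_b = Σ_k μ_{b,k} g_k(0), where μ_{b,k} = E_{f₁}[μ(M)K_b(M − m_k(0))]/E_{f₁}[K_b(M − m_k(0))], satisfies |θ̃_b − ∫ μ f₀| = O(w_max² + b²) as w_max, b → 0. -/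
open MeasureTheory

private lemma mvt_bound {f f' : ℝ → ℝ} {s : Set ℝ} (hs : Convex ℝ s)
    (hf : ∀ x ∈ s, HasDerivAt f (f' x) x) {C : ℝ}
    (hC : ∀ x ∈ s, |f' x| ≤ C) {x y : ℝ} (hx : x ∈ s) (hy : y ∈ s) :
    |f y - f x| ≤ C * |y - x| := by
  have := hs.norm_image_sub_le_of_norm_hasDerivWithin_le
    (fun z hz => (hf z hz).hasDerivWithinAt) (fun z hz => hC z hz) hx hy
  simpa [Real.norm_eq_abs] using this

private lemma taylor1_bound_s13 {f : ℝ → ℝ} {L : ℝ} (hf : ContDiff ℝ 2 f)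
    (hL : ∀ m, |iteratedDeriv 2 f m| ≤ L) (x y : ℝ) :
    |f y - f x - deriv f x * (y - x)| ≤ L * (y - x) ^ 2 := by
  have hd1 : Differentiable ℝ f := hf.differentiable (by norm_num)
  have hf' : ContDiff ℝ 1 (deriv f) := by
    have := (contDiff_succ_iff_deriv (n := 1)).mp (by exact_mod_cast hf)
    exact this.2.2
  have hd2 : Differentiable ℝ (deriv f) := hf'.differentiable one_ne_zero
  have hiter : ∀ t, deriv (deriv f) t = iteratedDeriv 2 f t := by
    intro t; rw [iteratedDeriv_succ, iteratedDeriv_one]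
  have hlip : ∀ a t : ℝ, |deriv f t - deriv f a| ≤ L * |t - a| := by
    intro a t
    have := mvt_bound (f := deriv f) (f' := iteratedDeriv 2 f) (convex_univ)
      (fun z _ => by rw [← hiter z]; exact (hd2 z).hasDerivAt)
      (fun z _ => hL z) (Set.mem_univ a) (Set.mem_univ t)
    simpa using this
  have hL0 : 0 ≤ L := (abs_nonneg _).trans (hL x)
  have key := mvt_bound (f := fun t => f t - deriv f x * t)
    (f' := fun t => deriv f t - deriv f x) (convex_uIcc x y)
    (fun z _ => ((hd1 z).hasDerivAt.sub
      (by simpa using (hasDerivAt_id z).const_mul (deriv f x))))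
    (C := L * |y - x|)
    (fun z hz => by
      refine (hlip x z).trans ?_
      have h1 : |z - x| ≤ |y - x| := by
        rcases le_total x y with h | h
        · rw [Set.uIcc_of_le h] at hz
          rw [abs_of_nonneg (by linarith [hz.1]), abs_of_nonneg (by linarith)]
          linarith [hz.2]
        · rw [Set.uIcc_of_ge h] at hz
          rw [abs_of_nonpos (by linarith [hz.2]), abs_of_nonpos (by linarith)]
          linarith [hz.1]
      exact mul_le_mul_of_nonneg_left h1 hL0)
    (Set.left_mem_uIcc) (Set.right_mem_uIcc)
  have h2 : (fun t => f t - deriv f x * t) y - (fun t => f t - deriv f x * t) x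
      = f y - f x - deriv f x * (y - x) := by ring
  rw [h2] at key
  calc |f y - f x - deriv f x * (y - x)| ≤ L * |y - x| * |y - x| := key
    _ = L * (y - x) ^ 2 := by rw [mul_assoc, ← abs_mul, ← sq, abs_sq]

private lemma integrable_K_mul {K : ℝ → ℝ} (hKnn : ∀ u, 0 ≤ K u) (hKint : Integrable K)
    (hKmeas : Measurable K) {φ : ℝ → ℝ} (hφ : Continuous φ) {C : ℝ}
    (hC : ∀ u ∈ tsupport K, |φ u| ≤ C) :
    Integrable (fun u => K u * φ u) := by
  refine (hKint.const_mul C).mono'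
    ((hKmeas.mul hφ.measurable).aestronglyMeasurable) ?_
  refine Filter.Eventually.of_forall fun u => ?_
  by_cases h : u ∈ tsupport K
  · have h1 := hC u h
    rw [Real.norm_eq_abs, abs_mul, abs_of_nonneg (hKnn u)]
    calc K u * |φ u| ≤ K u * C := mul_le_mul_of_nonneg_left h1 (hKnn u)
      _ = C * K u := mul_comm _ _
  · have h0 : K u = 0 := image_eq_zero_of_notMem_tsupport h
    simp [h0]

set_option maxHeartbeats 1600000 in
/-- Combination of Lemmas 2 and 3: the smoothed debiased coarsened functional
approximates the true functional with total error `O(wmax² + b²)`, uniformly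
over binnings with bins of width at most `wmax` and bandwidths `b < b₀`. -/
theorem stmt13 (Kk μ f₀ f₁ : ℝ → ℝ) (L Lf δ S₁ S₂ : ℝ) (hS : S₁ < S₂)
    (hKnn : ∀ u, 0 ≤ Kk u) (hKsymm : ∀ u, Kk (-u) = Kk u)
    (hK1 : ∫ u, Kk u = 1) (hKu : ∫ u, u * Kk u = 0)
    (hK2 : Integrable (fun u => u ^ 2 * Kk u))
    (hKcs : HasCompactSupport Kk) (hKmeas : Measurable Kk)
    (hμC2 : ContDiff ℝ 2 μ) (hμ'' : ∀ m, |iteratedDeriv 2 μ m| ≤ L)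
    (hf₀nn : ∀ m, 0 ≤ f₀ m) (hf₀1 : ∫ m, f₀ m = 1)
    (hf₀supp : ∀ m, f₀ m ≠ 0 → m ∈ Set.Icc S₁ S₂)
    (hf₀int : Integrable f₀)
    (hμf₀int : Integrable (fun m => μ m * f₀ m))
    (hmf₀int : Integrable (fun m => m * f₀ m))
    (hf₁nn : ∀ m, 0 ≤ f₁ m) (hf₁1 : ∫ m, f₁ m = 1)
    (hf₁C2 : ContDiff ℝ 2 f₁) (hf₁'' : ∀ m, |iteratedDeriv 2 f₁ m| ≤ Lf)
    (hδ : 0 < δ)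
    (hf₁δ : ∀ m ∈ Set.Icc (S₁ - 1) (S₂ + 1), δ ≤ f₁ m) :
    ∃ Cc > (0:ℝ), ∃ b₀ > (0:ℝ), ∀ b ∈ Set.Ioo (0:ℝ) b₀, ∀ wmax > (0:ℝ),
      ∀ (n : ℕ) (c d : Fin n → ℝ),
        (∀ k, c k ≤ d k) →
        (∀ k, d k - c k ≤ wmax) →
        (∀ k, Set.Icc (c k) (d k) ⊆ Set.Icc S₁ S₂) →
        (Pairwise fun i j =>
          Disjoint (Set.Icc (c i) (d i)) (Set.Icc (c j) (d j))) →
        (∀ m, f₀ m ≠ 0 → m ∈ ⋃ k, Set.Icc (c k) (d k)) →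
        ∀ (g mk μbk : Fin n → ℝ),
          (∀ k, g k = ∫ m in Set.Icc (c k) (d k), f₀ m) →
          (∀ k, 0 < g k) →
          (∀ k, mk k = (∫ m in Set.Icc (c k) (d k), m * f₀ m) / g k) →
          (∀ k, μbk k =
            (∫ m, μ m * (Kk ((m - mk k) / b) / b) * f₁ m)
              / (∫ m, (Kk ((m - mk k) / b) / b) * f₁ m)) →
          |∑ k, μbk k * g k - ∫ m, μ m * f₀ m| ≤ Cc * (wmax ^ 2 + b ^ 2) := by
  -- kernel support radius
  obtain ⟨r, hr⟩ := hKcs.isBounded.subset_closedBall 0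
  set A : ℝ := max r 1 with hA
  have hA1 : (1:ℝ) ≤ A := le_max_right r 1
  have hA0 : (0:ℝ) < A := by linarith
  have hsuppA : ∀ u ∈ tsupport Kk, |u| ≤ A := by
    intro u hu
    have h1 := hr hu
    rw [Metric.mem_closedBall, Real.dist_eq, sub_zero] at h1
    exact h1.trans (le_max_left r 1)
  have hKint : Integrable Kk := by
    by_contra h; rw [integral_undef h] at hK1; norm_num at hK1
  -- the compact interval I and bounds on it
  set I : Set ℝ := Set.Icc (S₁ - 1) (S₂ + 1) with hIdef
  have hIconv : Convex ℝ I := convex_Icc _ _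
  have hImem : (S₁ - 1) ∈ I := ⟨le_rfl, by linarith⟩
  obtain ⟨Mf, hMf⟩ := isCompact_Icc.exists_bound_of_continuousOn
    (hf₁C2.continuous.continuousOn (s := I))
  obtain ⟨Mμ, hMμ⟩ := isCompact_Icc.exists_bound_of_continuousOn
    (hμC2.continuous.continuousOn (s := I))
  obtain ⟨Mμ', hMμ'⟩ := isCompact_Icc.exists_bound_of_continuousOn
    ((hμC2.continuous_deriv one_le_two).continuousOn (s := I))
  obtain ⟨M1, hM1⟩ := isCompact_Icc.exists_bound_of_continuousOn
    ((hf₁C2.continuous_deriv one_le_two).continuousOn (s := I))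
  have hMf0 : 0 ≤ Mf := (norm_nonneg _).trans (hMf _ hImem)
  have hMμ'0 : 0 ≤ Mμ' := (norm_nonneg _).trans (hMμ' _ hImem)
  have hM10 : 0 ≤ M1 := (norm_nonneg _).trans (hM1 _ hImem)
  have hL0 : 0 ≤ L := (abs_nonneg _).trans (hμ'' 0)
  set κ₂ : ℝ := ∫ u, u ^ 2 * Kk u with hκdef
  have hκ0 : 0 ≤ κ₂ :=
    integral_nonneg fun u => mul_nonneg (sq_nonneg u) (hKnn u)
  set C₁ : ℝ := L * Mf + Mμ' * M1 with hC₁def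
  have hC₁0 : 0 ≤ C₁ := by positivity
  set Cs : ℝ := C₁ * κ₂ / δ with hCsdef
  have hCs0 : 0 ≤ Cs := by positivity
  refine ⟨max L Cs + 1, by positivity, A⁻¹, by positivity, ?_⟩
  intro b hb wmax hw n c d hcd hwid hsub hdisj hsupp0 g mk μbk hg hgpos hmk hμbk
  have hb0 : 0 < b := hb.1
  have hbA : b * A ≤ 1 := by
    have := mul_lt_mul_of_pos_right hb.2 hA0
    rw [inv_mul_cancel₀ (ne_of_gt hA0)] at this
    exact this.le
  set B : Fin n → Set ℝ := fun k => Set.Icc (c k) (d k) with hBdef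
  -- within-bin means lie in the bins
  have hmkmem : ∀ k, mk k ∈ B k := by
    intro k
    have h1 : c k * g k ≤ ∫ m in B k, m * f₀ m := by
      rw [hg k, ← integral_const_mul]
      exact setIntegral_mono_on ((hf₀int.const_mul _).integrableOn)
        (hmf₀int.integrableOn) measurableSet_Icc
        (fun m hm => mul_le_mul_of_nonneg_right hm.1 (hf₀nn m))
    have h2 : (∫ m in B k, m * f₀ m) ≤ d k * g k := by
      rw [hg k, ← integral_const_mul]
      exact setIntegral_mono_on (hmf₀int.integrableOn)
        ((hf₀int.const_mul _).integrableOn) measurableSet_Icc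
        (fun m hm => mul_le_mul_of_nonneg_right hm.2 (hf₀nn m))
    constructor
    · rw [hmk k]; exact (le_div_iff₀ (hgpos k)).mpr h1
    · rw [hmk k]; exact (div_le_iff₀ (hgpos k)).mpr h2
  -- decomposition of whole-line integrals into bins
  have hsum : ∀ F : ℝ → ℝ, Integrable F → (∀ m, f₀ m = 0 → F m = 0) →
      ∫ m, F m = ∑ k, ∫ m in B k, F m := by
    intro F hFi hF0
    have h1 : ∫ m in ⋃ k ∈ Finset.univ, B k, F m = ∑ k, ∫ m in B k, F m :=
      integral_biUnion_finset Finset.univ (fun i _ => measurableSet_Icc)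
        (fun i _ j _ hij => hdisj hij) (fun i _ => hFi.integrableOn)
    rw [← h1]
    have h2 : (⋃ k ∈ Finset.univ, B k) = ⋃ k, B k := by simp
    rw [h2]
    refine (setIntegral_eq_integral_of_forall_compl_eq_zero fun m hm => ?_).symm
    refine hF0 m ?_
    by_contra h
    exact hm (hsupp0 m h)
  have hg1 : ∑ k, g k = 1 := by
    have e1 : ∑ k, g k = ∑ k, ∫ m in B k, f₀ m := by
      exact Finset.sum_congr rfl fun k _ => hg k
    rw [e1, ← hsum f₀ hf₀int fun m h => h, hf₀1]
  have hμsum : ∫ m, μ m * f₀ m = ∑ k, ∫ m in B k, μ m * f₀ m :=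
    hsum _ hμf₀int fun m h => by rw [h, mul_zero]
  have hmkg : ∀ k, ∫ m in B k, m * f₀ m = mk k * g k := by
    intro k
    rw [hmk k, div_mul_cancel₀ _ (ne_of_gt (hgpos k))]
  -- Lemma 2 : binning error per bin
  have hbin : ∀ k, |μ (mk k) * g k - ∫ m in B k, μ m * f₀ m| ≤ L * wmax ^ 2 * g k := by
    intro k
    have he : (fun m => (μ m - μ (mk k) - deriv μ (mk k) * (m - mk k)) * f₀ m)
        = fun m => μ m * f₀ m - (μ (mk k) - deriv μ (mk k) * mk k) * f₀ m
            - deriv μ (mk k) * (m * f₀ m) := by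
      funext m; ring
    have hIint : IntegrableOn
        (fun m => (μ m - μ (mk k) - deriv μ (mk k) * (m - mk k)) * f₀ m) (B k) := by
      rw [he]
      exact (hμf₀int.integrableOn.sub ((hf₀int.const_mul _).integrableOn)).sub
        ((hmf₀int.const_mul _).integrableOn)
    have hval : ∫ m in B k, (μ m - μ (mk k) - deriv μ (mk k) * (m - mk k)) * f₀ m
        = (∫ m in B k, μ m * f₀ m) - μ (mk k) * g k := by
      rw [he]
      have i2 : IntegrableOn (fun m => (μ (mk k) - deriv μ (mk k) * mk k) * f₀ m) (B k) :=
        (hf₀int.const_mul _).integrableOn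
      have i3 : IntegrableOn (fun m => deriv μ (mk k) * (m * f₀ m)) (B k) :=
        (hmf₀int.const_mul _).integrableOn
      have i1 : IntegrableOn
          (fun m => μ m * f₀ m - (μ (mk k) - deriv μ (mk k) * mk k) * f₀ m) (B k) :=
        hμf₀int.integrableOn.sub i2
      rw [integral_sub i1 i3, integral_sub hμf₀int.integrableOn i2,
        integral_const_mul, integral_const_mul, ← hg k, hmkg k]
      ring
    have hbd : |∫ m in B k, (μ m - μ (mk k) - deriv μ (mk k) * (m - mk k)) * f₀ m|
        ≤ L * wmax ^ 2 * g k := by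
      have hmain := norm_integral_le_of_norm_le (μ := volume.restrict (B k))
        (f := fun m => (μ m - μ (mk k) - deriv μ (mk k) * (m - mk k)) * f₀ m)
        (g := fun m => L * wmax ^ 2 * f₀ m)
        ((hf₀int.const_mul _).integrableOn)
        ((ae_restrict_iff' measurableSet_Icc).mpr (Filter.Eventually.of_forall fun m hm => by
          rw [Real.norm_eq_abs, abs_mul, abs_of_nonneg (hf₀nn m)]
          have ht := taylor1_bound_s13 hμC2 hμ'' (mk k) m
          have hsq : (m - mk k) ^ 2 ≤ wmax ^ 2 := by
            have h1 := (hmkmem k).1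
            have h2 := (hmkmem k).2
            have h3 := hwid k
            have := sq_le_sq' (by linarith [hm.1, hm.2] : -wmax ≤ m - mk k)
              (by linarith [hm.1, hm.2] : m - mk k ≤ wmax)
            exact this
          calc |μ m - μ (mk k) - deriv μ (mk k) * (m - mk k)| * f₀ m
              ≤ (L * (m - mk k) ^ 2) * f₀ m :=
                mul_le_mul_of_nonneg_right ht (hf₀nn m)
            _ ≤ L * wmax ^ 2 * f₀ m := by
                nlinarith [mul_nonneg (mul_nonneg hL0 (sub_nonneg.mpr hsq)) (hf₀nn m)]))
      rw [Real.norm_eq_abs] at hmain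
      refine hmain.trans ?_
      rw [integral_const_mul, ← hg k]
    rw [hval] at hbd
    calc |μ (mk k) * g k - ∫ m in B k, μ m * f₀ m|
        = |(∫ m in B k, μ m * f₀ m) - μ (mk k) * g k| := by rw [abs_sub_comm]
      _ ≤ L * wmax ^ 2 * g k := hbd
  -- Lemma 3 : smoothing error per bin
  have hsm : ∀ k, |μbk k - μ (mk k)| ≤ Cs * b ^ 2 := by
    intro k
    set m0 : ℝ := mk k with hm0def
    have hm0 : m0 ∈ Set.Icc S₁ S₂ := hsub k (hmkmem k)
    have hm0I : m0 ∈ I := ⟨by linarith [hm0.1], by linarith [hm0.2]⟩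
    have hmem : ∀ u ∈ tsupport Kk, m0 + b * u ∈ I := by
      intro u hu
      have h1 := hsuppA u hu
      have habs : |b * u| ≤ 1 := by
        rw [abs_mul, abs_of_pos hb0]
        calc b * |u| ≤ b * A := mul_le_mul_of_nonneg_left h1 hb0.le
          _ ≤ 1 := hbA
      obtain ⟨h2, h3⟩ := abs_le.mp habs
      exact ⟨by linarith [hm0.1], by linarith [hm0.2]⟩
    -- change of variables
    have key : ∀ G : ℝ → ℝ, ∫ x, G ((x - m0) / b) = b * ∫ u, G u := by
      intro G
      have e1 : ∫ x, G ((x - m0) / b) = ∫ x, G (x / b) := by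
        have := integral_sub_right_eq_self (μ := (volume : Measure ℝ)) (fun y => G (y / b)) m0
        simpa using this
      rw [e1, Measure.integral_comp_div G b, abs_of_pos hb0, smul_eq_mul]
    have hNum : (∫ m, μ m * (Kk ((m - m0) / b) / b) * f₁ m)
        = ∫ u, Kk u * (μ (m0 + b * u) * f₁ (m0 + b * u)) := by
      have e1 : (∫ m, μ m * (Kk ((m - m0) / b) / b) * f₁ m)
          = ∫ x, (fun u => μ (m0 + b * u) * (Kk u / b) * f₁ (m0 + b * u)) ((x - m0) / b) := by
        congr 1; funext m
        have hm' : m0 + b * ((m - m0) / b) = m := by field_simp; ring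
        simp only [hm']
      calc (∫ m, μ m * (Kk ((m - m0) / b) / b) * f₁ m)
          = ∫ x, (fun u => μ (m0 + b * u) * (Kk u / b) * f₁ (m0 + b * u)) ((x - m0) / b) := e1
        _ = b * ∫ u, μ (m0 + b * u) * (Kk u / b) * f₁ (m0 + b * u) :=
            key (fun u => μ (m0 + b * u) * (Kk u / b) * f₁ (m0 + b * u))
        _ = ∫ u, b * (μ (m0 + b * u) * (Kk u / b) * f₁ (m0 + b * u)) :=
            (integral_const_mul b _).symm
        _ = ∫ u, Kk u * (μ (m0 + b * u) * f₁ (m0 + b * u)) := by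
            congr 1; funext u; field_simp
    have hDen : (∫ m, (Kk ((m - m0) / b) / b) * f₁ m)
        = ∫ u, Kk u * f₁ (m0 + b * u) := by
      have e1 : (∫ m, (Kk ((m - m0) / b) / b) * f₁ m)
          = ∫ x, (fun u => (Kk u / b) * f₁ (m0 + b * u)) ((x - m0) / b) := by
        congr 1; funext m
        have hm' : m0 + b * ((m - m0) / b) = m := by field_simp; ring
        simp only [hm']
      calc (∫ m, (Kk ((m - m0) / b) / b) * f₁ m)
          = ∫ x, (fun u => (Kk u / b) * f₁ (m0 + b * u)) ((x - m0) / b) := e1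
        _ = b * ∫ u, (Kk u / b) * f₁ (m0 + b * u) :=
            key (fun u => (Kk u / b) * f₁ (m0 + b * u))
        _ = ∫ u, b * ((Kk u / b) * f₁ (m0 + b * u)) := (integral_const_mul b _).symm
        _ = ∫ u, Kk u * f₁ (m0 + b * u) := by
            congr 1; funext u; field_simp
    -- integrability
    have haff : Continuous fun u : ℝ => m0 + b * u :=
      continuous_const.add (continuous_const.mul continuous_id)
    have hcont1 : Continuous fun u : ℝ => μ (m0 + b * u) * f₁ (m0 + b * u) :=
      (hμC2.continuous.comp haff).mul (hf₁C2.continuous.comp haff)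
    have hcont2 : Continuous fun u : ℝ => f₁ (m0 + b * u) :=
      hf₁C2.continuous.comp haff
    have hMμ0 : 0 ≤ Mμ := (norm_nonneg _).trans (hMμ _ hImem)
    have hFnint : Integrable (fun u => Kk u * (μ (m0 + b * u) * f₁ (m0 + b * u))) := by
      refine integrable_K_mul hKnn hKint hKmeas hcont1 (C := Mμ * Mf) fun u hu => ?_
      have hp := hmem u hu
      rw [abs_mul]
      exact mul_le_mul ((Real.norm_eq_abs _) ▸ hMμ _ hp) ((Real.norm_eq_abs _) ▸ hMf _ hp)
        (abs_nonneg _) hMμ0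
    have hFDint : Integrable (fun u => Kk u * f₁ (m0 + b * u)) := by
      refine integrable_K_mul hKnn hKint hKmeas hcont2 (C := Mf) fun u hu => ?_
      exact (Real.norm_eq_abs _) ▸ hMf _ (hmem u hu)
    have huKint : Integrable (fun u : ℝ => Kk u * u) := by
      refine integrable_K_mul hKnn hKint hKmeas continuous_id (C := A) fun u hu => ?_
      exact hsuppA u hu
    -- denominator lower bound
    have hDenLB : δ ≤ ∫ u, Kk u * f₁ (m0 + b * u) := by
      calc δ = δ * ∫ u, Kk u := by rw [hK1, mul_one]
        _ = ∫ u, δ * Kk u := (integral_const_mul δ _).symm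
        _ ≤ ∫ u, Kk u * f₁ (m0 + b * u) := by
            refine integral_mono (hKint.const_mul δ) hFDint fun u => ?_
            by_cases h : u ∈ tsupport Kk
            · have := hf₁δ _ (hmem u h)
              calc δ * Kk u = Kk u * δ := mul_comm _ _
                _ ≤ Kk u * f₁ (m0 + b * u) := mul_le_mul_of_nonneg_left this (hKnn u)
            · rw [image_eq_zero_of_notMem_tsupport h]; simp
    have hDenpos : 0 < ∫ u, Kk u * f₁ (m0 + b * u) := lt_of_lt_of_le hδ hDenLB
    -- numerator bias bound
    set c0 : ℝ := deriv μ m0 * f₁ m0 * b with hc0def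
    have hErrval : ∫ u, (Kk u * (μ (m0 + b * u) * f₁ (m0 + b * u))
          - μ m0 * (Kk u * f₁ (m0 + b * u)) - c0 * (Kk u * u))
        = (∫ u, Kk u * (μ (m0 + b * u) * f₁ (m0 + b * u)))
          - μ m0 * ∫ u, Kk u * f₁ (m0 + b * u) := by
      have j2 : Integrable (fun u => μ m0 * (Kk u * f₁ (m0 + b * u))) :=
        hFDint.const_mul _
      have j3 : Integrable (fun u => c0 * (Kk u * u)) := huKint.const_mul _
      have j1 : Integrable (fun u => Kk u * (μ (m0 + b * u) * f₁ (m0 + b * u))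
          - μ m0 * (Kk u * f₁ (m0 + b * u))) := hFnint.sub j2
      rw [integral_sub j1 j3, integral_sub hFnint j2, integral_const_mul, integral_const_mul]
      have h0 : ∫ u, Kk u * u = 0 := by
        rw [← hKu]; congr 1; funext u; ring
      rw [h0, mul_zero, sub_zero]
    have hptw : ∀ u, ‖Kk u * (μ (m0 + b * u) * f₁ (m0 + b * u))
          - μ m0 * (Kk u * f₁ (m0 + b * u)) - c0 * (Kk u * u)‖
        ≤ C₁ * b ^ 2 * (u ^ 2 * Kk u) := by
      intro u
      by_cases h : u ∈ tsupport Kk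
      · have hpI := hmem u h
        set p : ℝ := m0 + b * u with hpdef
        have hpm : p - m0 = b * u := by rw [hpdef]; ring
        have e : Kk u * (μ p * f₁ p) - μ m0 * (Kk u * f₁ p) - c0 * (Kk u * u)
            = ((μ p - μ m0 - deriv μ m0 * (b * u)) * f₁ p
               + deriv μ m0 * (b * u) * (f₁ p - f₁ m0)) * Kk u := by
          rw [hc0def]; ring
        rw [Real.norm_eq_abs, e, abs_mul, abs_of_nonneg (hKnn u)]
        have t1 : |μ p - μ m0 - deriv μ m0 * (b * u)| ≤ L * (b * u) ^ 2 := by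
          have := taylor1_bound_s13 hμC2 hμ'' m0 p
          rwa [hpm] at this
        have t2 : |f₁ p - f₁ m0| ≤ M1 * |b * u| := by
          have := mvt_bound (f := f₁) (f' := deriv f₁) hIconv
            (fun z _ => (hf₁C2.differentiable two_ne_zero z).hasDerivAt)
            (C := M1) (fun z hz => (Real.norm_eq_abs _) ▸ hM1 z hz) hm0I hpI
          rwa [hpm] at this
        have t3 : |deriv μ m0| ≤ Mμ' := (Real.norm_eq_abs _) ▸ hMμ' _ hm0I
        have t4 : |f₁ p| ≤ Mf := (Real.norm_eq_abs _) ▸ hMf _ hpI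
        have hinner : |(μ p - μ m0 - deriv μ m0 * (b * u)) * f₁ p
            + deriv μ m0 * (b * u) * (f₁ p - f₁ m0)| ≤ C₁ * b ^ 2 * u ^ 2 := by
          have habs2 : |b * u| * |b * u| = b ^ 2 * u ^ 2 := by
            rw [← abs_mul, abs_of_nonneg (mul_self_nonneg (b * u))]
            ring
          calc |(μ p - μ m0 - deriv μ m0 * (b * u)) * f₁ p
              + deriv μ m0 * (b * u) * (f₁ p - f₁ m0)|
              ≤ |(μ p - μ m0 - deriv μ m0 * (b * u)) * f₁ p|
                + |deriv μ m0 * (b * u) * (f₁ p - f₁ m0)| := abs_add_le _ _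
            _ = |μ p - μ m0 - deriv μ m0 * (b * u)| * |f₁ p|
                + |deriv μ m0| * |b * u| * |f₁ p - f₁ m0| := by
                  rw [abs_mul, abs_mul, abs_mul]
            _ ≤ (L * (b * u) ^ 2) * Mf + Mμ' * |b * u| * (M1 * |b * u|) := by
                  have h1 : |μ p - μ m0 - deriv μ m0 * (b * u)| * |f₁ p|
                      ≤ (L * (b * u) ^ 2) * Mf :=
                    mul_le_mul t1 t4 (abs_nonneg _) (mul_nonneg hL0 (sq_nonneg _))
                  have h2 : |deriv μ m0| * |b * u| * |f₁ p - f₁ m0|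
                      ≤ Mμ' * |b * u| * (M1 * |b * u|) :=
                    mul_le_mul (mul_le_mul_of_nonneg_right t3 (abs_nonneg _)) t2
                      (abs_nonneg _) (by positivity)
                  linarith
            _ = (L * Mf) * ((b * u) ^ 2) + (Mμ' * M1) * (|b * u| * |b * u|) := by
                  ring
            _ = C₁ * b ^ 2 * u ^ 2 := by
                  rw [habs2, hC₁def]; ring
        calc |(μ p - μ m0 - deriv μ m0 * (b * u)) * f₁ p
            + deriv μ m0 * (b * u) * (f₁ p - f₁ m0)| * Kk u
            ≤ (C₁ * b ^ 2 * u ^ 2) * Kk u := mul_le_mul_of_nonneg_right hinner (hKnn u)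
          _ = C₁ * b ^ 2 * (u ^ 2 * Kk u) := by ring
      · have h0 : Kk u = 0 := image_eq_zero_of_notMem_tsupport h
        simp [h0]
    have hnum : |(∫ u, Kk u * (μ (m0 + b * u) * f₁ (m0 + b * u)))
        - μ m0 * ∫ u, Kk u * f₁ (m0 + b * u)| ≤ C₁ * b ^ 2 * κ₂ := by
      rw [← hErrval]
      have hmain := norm_integral_le_of_norm_le (μ := (volume : Measure ℝ))
        (g := fun u => C₁ * b ^ 2 * (u ^ 2 * Kk u))
        (hK2.const_mul (C₁ * b ^ 2)) (Filter.Eventually.of_forall hptw)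
      rw [Real.norm_eq_abs] at hmain
      refine hmain.trans ?_
      rw [integral_const_mul, hκdef]
    -- conclude
    rw [hμbk k, hNum, hDen]
    rw [div_sub' (ne_of_gt hDenpos), abs_div, abs_of_pos hDenpos,
      mul_comm (∫ u, Kk u * f₁ (m0 + b * u)) (μ m0)]
    calc |(∫ u, Kk u * (μ (m0 + b * u) * f₁ (m0 + b * u)))
          - μ m0 * ∫ u, Kk u * f₁ (m0 + b * u)| / (∫ u, Kk u * f₁ (m0 + b * u))
        ≤ (C₁ * b ^ 2 * κ₂) / δ := div_le_div₀ (by positivity) hnum hδ hDenLB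
      _ = Cs * b ^ 2 := by rw [hCsdef]; ring
  -- assemble
  have hsplit : ∑ k, μbk k * g k - ∫ m, μ m * f₀ m
      = (∑ k, (μbk k - μ (mk k)) * g k)
        + ∑ k, (μ (mk k) * g k - ∫ m in B k, μ m * f₀ m) := by
    rw [hμsum, ← Finset.sum_add_distrib, ← Finset.sum_sub_distrib]
    refine Finset.sum_congr rfl fun k _ => by ring
  rw [hsplit]
  have h1 : |∑ k, (μbk k - μ (mk k)) * g k| ≤ Cs * b ^ 2 := by
    calc |∑ k, (μbk k - μ (mk k)) * g k| ≤ ∑ k, |(μbk k - μ (mk k)) * g k| :=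
        Finset.abs_sum_le_sum_abs _ _
      _ ≤ ∑ k, (Cs * b ^ 2) * g k := by
          refine Finset.sum_le_sum fun k _ => ?_
          rw [abs_mul, abs_of_pos (hgpos k)]
          exact mul_le_mul_of_nonneg_right (hsm k) (hgpos k).le
      _ = Cs * b ^ 2 := by rw [← Finset.mul_sum, hg1, mul_one]
  have h2 : |∑ k, (μ (mk k) * g k - ∫ m in B k, μ m * f₀ m)| ≤ L * wmax ^ 2 := by
    calc |∑ k, (μ (mk k) * g k - ∫ m in B k, μ m * f₀ m)|
        ≤ ∑ k, |μ (mk k) * g k - ∫ m in B k, μ m * f₀ m| := Finset.abs_sum_le_sum_abs _ _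
      _ ≤ ∑ k, L * wmax ^ 2 * g k := Finset.sum_le_sum fun k _ => hbin k
      _ = L * wmax ^ 2 := by rw [← Finset.mul_sum, hg1, mul_one]
  calc |(∑ k, (μbk k - μ (mk k)) * g k)
        + ∑ k, (μ (mk k) * g k - ∫ m in B k, μ m * f₀ m)|
      ≤ |∑ k, (μbk k - μ (mk k)) * g k|
        + |∑ k, (μ (mk k) * g k - ∫ m in B k, μ m * f₀ m)| := abs_add_le _ _
    _ ≤ Cs * b ^ 2 + L * wmax ^ 2 := add_le_add h1 h2
    _ ≤ (max L Cs + 1) * (wmax ^ 2 + b ^ 2) := by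
        nlinarith [le_max_left L Cs, le_max_right L Cs, sq_nonneg wmax, sq_nonneg b,
          hL0, hCs0]
end

section
/- Two-mediator debiased coarsening bound (single-bin core): let B₁, B₂ ⊂ ℝ be intervals of widths w₁, w₂, let ν₁ be a probability measure on B₁ with mean m₁*, and for each m₁ ∈ B₁ let ν₂(·|m₁) be a probability measure on B₂ with mean m₂*(m₁). Let μ: B₁ × B₂ → ℝ be twice continuously differentiable, and define η(m₁) = ∫ μ(m₁, m₂) dν₂(m₂|m₁). Assume η is twice continuously differentiable on B₁ with |η''| ≤ L₁ and |∂²μ/∂m₂²| ≤ L₂ on B₁ × B₂. Then |∫ η dν₁ − μ(m₁*, m₂*(m₁*))| ≤ L₁ w₁²/8 + L₂ w₂²/8. -/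
open MeasureTheory

lemma myIntegrable_of_ae_bounded {ν : Measure ℝ} [IsFiniteMeasure ν] {f : ℝ → ℝ}
    (hmeas : AEStronglyMeasurable f ν) {C : ℝ} (h : ∀ᵐ x ∂ν, |f x| ≤ C) :
    Integrable f ν :=
  (integrable_const C).mono' hmeas (by simpa using h)

lemma myAeMem {a b : ℝ} {ν : Measure ℝ} (hν : ν (Set.Icc a b)ᶜ = 0) :
    ∀ᵐ x ∂ν, x ∈ Set.Icc a b := by
  rw [MeasureTheory.ae_iff]
  exact measure_mono_null (fun x hx => hx) hν

lemma myIntegrableId {a b : ℝ} {ν : Measure ℝ} [IsFiniteMeasure ν]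
    (hν : ν (Set.Icc a b)ᶜ = 0) : Integrable (fun x : ℝ => x) ν := by
  refine myIntegrable_of_ae_bounded (aestronglyMeasurable_id) (C := max |a| |b|) ?_
  filter_upwards [myAeMem hν] with x hx
  exact abs_le_max_abs_abs hx.1 hx.2

lemma myMeanMem {a b : ℝ} (hab : a ≤ b) {ν : Measure ℝ} [IsProbabilityMeasure ν]
    (hν : ν (Set.Icc a b)ᶜ = 0) : (∫ x, x ∂ν) ∈ Set.Icc a b := by
  have hint := myIntegrableId hν
  have hae := myAeMem hν
  constructor
  · have : ∫ (_ : ℝ), a ∂ν ≤ ∫ x, x ∂ν := by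
      refine integral_mono_ae (integrable_const a) hint ?_
      filter_upwards [hae] with x hx using hx.1
    simpa using this
  · have : ∫ x, x ∂ν ≤ ∫ (_ : ℝ), b ∂ν := by
      refine integral_mono_ae hint (integrable_const b) ?_
      filter_upwards [hae] with x hx using hx.2
    simpa using this

/-- Second-order Taylor-type bound at an interior point. -/
lemma myTaylor {a b L : ℝ} (hab : a < b) {f : ℝ → ℝ}
    (hf : ContDiffOn ℝ 2 f (Set.Icc a b))
    (hL : ∀ x ∈ Set.Icc a b, |iteratedDerivWithin 2 f (Set.Icc a b) x| ≤ L)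
    {m : ℝ} (hm : m ∈ Set.Icc a b) :
    ∃ c, ∀ x ∈ Set.Icc a b, |f x - f m - c * (x - m)| ≤ L / 2 * (x - m) ^ 2 := by
  set s := Set.Icc a b with hs
  have husd : UniqueDiffOn ℝ s := uniqueDiffOn_Icc hab
  set f' := derivWithin f s with hf'def
  have hf'cd : ContDiffOn ℝ 1 f' s := hf.derivWithin husd (by norm_num)
  have hf'cont : ContinuousOn f' s := hf'cd.continuousOn
  -- second derivative bound
  have hone : ∀ y ∈ s, iteratedDerivWithin 1 f s y = derivWithin f s y := by
    intro y hy
    exact congrFun iteratedDerivWithin_one y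
  have hf''bd : ∀ x ∈ s, |derivWithin f' s x| ≤ L := by
    intro x hx
    have h2 : iteratedDerivWithin 2 f s x = derivWithin (iteratedDerivWithin 1 f s) s x :=
      congrFun iteratedDerivWithin_succ x
    have h3 : derivWithin (iteratedDerivWithin 1 f s) s x = derivWithin (derivWithin f s) s x :=
      derivWithin_congr hone (hone x hx)
    have h4 := hL x hx
    rw [h2, h3] at h4
    exact h4
  -- Lipschitz bound on f'
  have hf'lip : ∀ x ∈ s, |f' x - f' m| ≤ L * |x - m| := by
    intro x hx
    have := Convex.norm_image_sub_le_of_norm_hasDerivWithin_le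
      (f := f') (f' := fun y => derivWithin f' s y) (s := s)
      (fun y hy => ((hf'cd.differentiableOn (by norm_num)) y hy).hasDerivWithinAt)
      (fun y hy => by simpa using hf''bd y hy) (convex_Icc a b) hm hx
    simpa [Real.norm_eq_abs] using this
  -- FTC
  have hderiv : ∀ t ∈ Set.Ioo a b, HasDerivAt f (f' t) t := by
    intro t ht
    have hmem : s ∈ nhds t := Icc_mem_nhds ht.1 ht.2
    have hdiff : DifferentiableAt ℝ f t :=
      ((hf.differentiableOn (by norm_num)) t (Set.Ioo_subset_Icc_self ht)).differentiableAt hmem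
    have : f' t = deriv f t := derivWithin_of_mem_nhds hmem
    rw [this]
    exact hdiff.hasDerivAt
  have hftc : ∀ x ∈ s, f x - f m = ∫ t in m..x, f' t := by
    intro x hx
    rcases le_total m x with h | h
    · rw [intervalIntegral.integral_eq_sub_of_hasDeriv_right_of_le h
        (hf.continuousOn.mono (Set.Icc_subset_Icc hm.1 hx.2))
        (fun t ht => (hderiv t ⟨lt_of_le_of_lt hm.1 ht.1, lt_of_lt_of_le ht.2 hx.2⟩).hasDerivWithinAt)
        ((hf'cont.mono (Set.Icc_subset_Icc hm.1 hx.2)).intervalIntegrable_of_Icc h)]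
    · rw [intervalIntegral.integral_symm x m,
        intervalIntegral.integral_eq_sub_of_hasDeriv_right_of_le h
        (hf.continuousOn.mono (Set.Icc_subset_Icc hx.1 hm.2))
        (fun t ht => (hderiv t ⟨lt_of_le_of_lt hx.1 ht.1, lt_of_lt_of_le ht.2 hm.2⟩).hasDerivWithinAt)
        ((hf'cont.mono (Set.Icc_subset_Icc hx.1 hm.2)).intervalIntegrable_of_Icc h)]
      ring
  refine ⟨f' m, fun x hx => ?_⟩
  have hrem : f x - f m - f' m * (x - m) = ∫ t in m..x, (f' t - f' m) := by
    rw [intervalIntegral.integral_sub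
        (by rcases le_total m x with h|h
            · exact (hf'cont.mono (Set.Icc_subset_Icc hm.1 hx.2)).intervalIntegrable_of_Icc h
            · exact ((hf'cont.mono (Set.Icc_subset_Icc hx.1 hm.2)).intervalIntegrable_of_Icc h).symm)
        intervalIntegrable_const,
      intervalIntegral.integral_const, hftc x hx, smul_eq_mul]
    ring
  rw [hrem]
  rcases le_total m x with h | h
  · calc |∫ t in m..x, (f' t - f' m)| ≤ ∫ t in m..x, |f' t - f' m| := by
          simpa [Real.norm_eq_abs] using
            intervalIntegral.norm_integral_le_integral_norm (f := fun t => f' t - f' m) h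
    _ ≤ ∫ t in m..x, L * (t - m) := by
          refine intervalIntegral.integral_mono_on h ?_ ?_ ?_
          · exact (((hf'cont.mono (Set.Icc_subset_Icc hm.1 hx.2)).sub
              continuousOn_const).abs).intervalIntegrable_of_Icc h
          · exact (continuous_const.mul (continuous_id.sub continuous_const)).intervalIntegrable _ _
          · intro t ht
            have hts : t ∈ s := ⟨le_trans hm.1 ht.1, le_trans ht.2 hx.2⟩
            have := hf'lip t hts
            rwa [abs_of_nonneg (by linarith [ht.1] : (0:ℝ) ≤ t - m)] at this
    _ = L / 2 * (x - m) ^ 2 := by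
          rw [intervalIntegral.integral_const_mul,
            intervalIntegral.integral_sub intervalIntegral.intervalIntegrable_id
              intervalIntegrable_const,
            intervalIntegral.integral_const, smul_eq_mul]
          simp only [integral_id]
          ring
  · calc |∫ t in m..x, (f' t - f' m)| = |∫ t in x..m, (f' t - f' m)| := by
          rw [intervalIntegral.integral_symm x m, abs_neg]
    _ ≤ ∫ t in x..m, |f' t - f' m| := by
          simpa [Real.norm_eq_abs] using
            intervalIntegral.norm_integral_le_integral_norm (f := fun t => f' t - f' m) h
    _ ≤ ∫ t in x..m, L * (m - t) := by
          refine intervalIntegral.integral_mono_on h ?_ ?_ ?_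
          · exact (((hf'cont.mono (Set.Icc_subset_Icc hx.1 hm.2)).sub
              continuousOn_const).abs).intervalIntegrable_of_Icc h
          · exact (continuous_const.mul (continuous_const.sub continuous_id)).intervalIntegrable _ _
          · intro t ht
            have hts : t ∈ s := ⟨le_trans hx.1 ht.1, le_trans ht.2 hm.2⟩
            have := hf'lip t hts
            rwa [abs_of_nonpos (by linarith [ht.2] : t - m ≤ 0), neg_sub] at this
    _ = L / 2 * (x - m) ^ 2 := by
          rw [intervalIntegral.integral_const_mul,
            intervalIntegral.integral_sub intervalIntegrable_const
              intervalIntegral.intervalIntegrable_id,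
            intervalIntegral.integral_const, smul_eq_mul]
          simp only [integral_id]
          ring

/-- Single-bin core bound. -/
lemma myKey {a b L : ℝ} (hab : a ≤ b) (ν : Measure ℝ) [IsProbabilityMeasure ν]
    (hν : ν (Set.Icc a b)ᶜ = 0) {f : ℝ → ℝ}
    (hf : ContDiffOn ℝ 2 f (Set.Icc a b))
    (hL : ∀ x ∈ Set.Icc a b, |iteratedDerivWithin 2 f (Set.Icc a b) x| ≤ L) :
    |(∫ x, f x ∂ν) - f (∫ x, x ∂ν)| ≤ L * (b - a) ^ 2 / 8 := by
  have hae := myAeMem hν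
  have hL0 : 0 ≤ L := le_trans (abs_nonneg _) (hL a ⟨le_rfl, hab⟩)
  set m := ∫ x, x ∂ν with hmdef
  have hm : m ∈ Set.Icc a b := myMeanMem hab hν
  rcases eq_or_lt_of_le hab with heq | hab'
  · -- degenerate bin
    subst heq
    have hma : m = a := le_antisymm hm.2 hm.1
    have : ∫ x, f x ∂ν = ∫ _, f a ∂ν := by
      refine integral_congr_ae ?_
      filter_upwards [hae] with x hx
      have : x = a := le_antisymm hx.2 hx.1
      rw [this]
    rw [this, hma, integral_const]
    simp only [measure_univ, ENNReal.toReal_one, probReal_univ, one_smul, sub_self, abs_zero]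
    positivity
  -- continuous a.e.-representative of f
  have hfc : ContinuousOn f (Set.Icc a b) := hf.continuousOn
  set F : ℝ → ℝ := fun x => f (Set.projIcc a b hab x) with hFdef
  have hFcont : Continuous F :=
    (continuousOn_iff_continuous_restrict.mp hfc).comp continuous_projIcc
  have hFf : ∀ᵐ x ∂ν, F x = f x := by
    filter_upwards [hae] with x hx
    simp [hFdef, Set.projIcc_of_mem hab hx]
  obtain ⟨C, hC⟩ : ∃ C, ∀ x ∈ Set.Icc a b, |f x| ≤ C := by
    obtain ⟨C, hC⟩ := (isCompact_Icc (a := a) (b := b)).exists_bound_of_continuousOn hfc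
    exact ⟨C, fun x hx => by simpa using hC x hx⟩
  obtain ⟨c, hTay⟩ := myTaylor hab' hf hL hm
  -- integrabilities
  have hintId := myIntegrableId hν
  have hintF : Integrable F ν := by
    refine myIntegrable_of_ae_bounded hFcont.aestronglyMeasurable (C := C) ?_
    filter_upwards with x
    exact hC _ (Set.projIcc a b hab x).2
  have hintf : Integrable f ν := hintF.congr hFf
  have hintsq : ∀ d : ℝ, Integrable (fun x => (x - d) ^ 2) ν := by
    intro d
    refine myIntegrable_of_ae_bounded
      ((continuous_id.sub continuous_const).pow 2).aestronglyMeasurable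
      (C := (max |a - d| |b - d|) ^ 2) ?_
    filter_upwards [hae] with x hx
    rw [abs_of_nonneg (by positivity)]
    have h1 : |x - d| ≤ max |a - d| |b - d| := by
      rw [abs_le]
      constructor
      · refine le_trans ?_ (by linarith [hx.1] : a - d ≤ x - d)
        have := le_max_left |a - d| |b - d|
        linarith [neg_abs_le (a - d)]
      · refine le_trans (by linarith [hx.2] : x - d ≤ b - d) ?_
        exact le_trans (le_abs_self _) (le_max_right _ _)
    calc (x - d) ^ 2 = |x - d| ^ 2 := (sq_abs _).symm
    _ ≤ (max |a - d| |b - d|) ^ 2 := by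
        exact pow_le_pow_left₀ (abs_nonneg _) h1 2
  -- the centered integral
  have hcent : ∫ x, (x - m) ∂ν = 0 := by
    rw [integral_sub hintId (integrable_const m)]
    simp [hmdef]
  -- variance bound
  have hvar : ∫ x, (x - m) ^ 2 ∂ν ≤ (b - a) ^ 2 / 4 := by
    set c₀ := (a + b) / 2 with hc₀
    have hident : ∀ x : ℝ, (x - m) ^ 2 = (x - c₀) ^ 2 + (2 * (c₀ - m)) * (x - m) - (c₀ - m) ^ 2 := by
      intro x; ring
    have hintc : Integrable (fun x => x - m) ν := hintId.sub (integrable_const m)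
    have hintlin : Integrable (fun x => (2 * (c₀ - m)) * (x - m)) ν := hintc.const_mul _
    have hintadd : Integrable (fun x => (x - c₀) ^ 2 + (2 * (c₀ - m)) * (x - m)) ν :=
      (hintsq c₀).add hintlin
    have h1 : ∫ x, (x - m) ^ 2 ∂ν
        = ∫ x, (x - c₀) ^ 2 ∂ν + (2 * (c₀ - m)) * ∫ x, (x - m) ∂ν - (c₀ - m) ^ 2 := by
      calc ∫ x, (x - m) ^ 2 ∂ν
          = ∫ x, ((x - c₀) ^ 2 + (2 * (c₀ - m)) * (x - m) - (c₀ - m) ^ 2) ∂ν := by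
            simp_rw [← hident]
        _ = _ := by
            rw [integral_sub hintadd (integrable_const _),
              integral_add (hintsq c₀) hintlin, integral_const_mul, integral_const]
            simp
    rw [h1, hcent]
    have h2 : ∫ x, (x - c₀) ^ 2 ∂ν ≤ (b - a) ^ 2 / 4 := by
      have : ∫ x, (x - c₀) ^ 2 ∂ν ≤ ∫ _, (b - a) ^ 2 / 4 ∂ν := by
        refine integral_mono_ae (hintsq c₀) (integrable_const _) ?_
        filter_upwards [hae] with x hx
        have : |x - c₀| ≤ (b - a) / 2 := by
          rw [abs_le]
          constructor <;> [skip; skip] <;> simp [hc₀] at * <;> cases hx <;> linarith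
        calc (x - c₀) ^ 2 = |x - c₀| ^ 2 := (sq_abs _).symm
        _ ≤ ((b - a) / 2) ^ 2 := pow_le_pow_left₀ (abs_nonneg _) this 2
        _ = (b - a) ^ 2 / 4 := by ring
      simpa using this
    nlinarith [sq_nonneg (c₀ - m)]
  -- main estimate
  have hintc : Integrable (fun x => x - m) ν := hintId.sub (integrable_const m)
  have hintFm : Integrable (fun x => F x - f m) ν := hintF.sub (integrable_const _)
  have hintlin : Integrable (fun x => c * (x - m)) ν := hintc.const_mul c
  have hR : Integrable (fun x => F x - f m - c * (x - m)) ν := hintFm.sub hintlin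
  have hsplit : (∫ x, f x ∂ν) - f m = ∫ x, (F x - f m - c * (x - m)) ∂ν := by
    rw [integral_sub hintFm hintlin, integral_sub hintF (integrable_const _),
      integral_const_mul, hcent, integral_congr_ae hFf]
    simp
  rw [hsplit]
  calc |∫ x, (F x - f m - c * (x - m)) ∂ν| ≤ ∫ x, |F x - f m - c * (x - m)| ∂ν := by
        simpa [Real.norm_eq_abs] using
          norm_integral_le_integral_norm (fun x => F x - f m - c * (x - m))
  _ ≤ ∫ x, L / 2 * (x - m) ^ 2 ∂ν := by
      refine integral_mono_ae hR.abs ((hintsq m).const_mul _) ?_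
      filter_upwards [hae, hFf] with x hx hFx
      rw [hFx]
      exact hTay x hx
  _ = L / 2 * ∫ x, (x - m) ^ 2 ∂ν := integral_const_mul _ _
  _ ≤ L / 2 * ((b - a) ^ 2 / 4) := by
      refine mul_le_mul_of_nonneg_left hvar (by positivity)
  _ = L * (b - a) ^ 2 / 8 := by ring

/-- Two-mediator debiased coarsening bound (single-bin core, Appendix A):
evaluating the outcome surface at nested within-bin means approximates the
iterated within-bin average with error second order in each bin width. -/
theorem stmt19 (a₁ b₁ a₂ b₂ L₁ L₂ : ℝ) (h₁ : a₁ ≤ b₁) (h₂ : a₂ ≤ b₂)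
    (ν₁ : Measure ℝ) [IsProbabilityMeasure ν₁]
    (hν₁ : ν₁ (Set.Icc a₁ b₁)ᶜ = 0)
    (ν₂ : ℝ → Measure ℝ) (hν₂prob : ∀ m₁, IsProbabilityMeasure (ν₂ m₁))
    (hν₂supp : ∀ m₁, (ν₂ m₁) (Set.Icc a₂ b₂)ᶜ = 0)
    (m₁star : ℝ) (hm₁ : m₁star = ∫ m, m ∂ν₁)
    (m₂star : ℝ → ℝ) (hm₂ : ∀ m₁, m₂star m₁ = ∫ m, m ∂(ν₂ m₁))
    (μ : ℝ → ℝ → ℝ)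
    (hμC2 : ∀ m₁ ∈ Set.Icc a₁ b₁, ContDiffOn ℝ 2 (μ m₁) (Set.Icc a₂ b₂))
    (hL₂ : ∀ m₁ ∈ Set.Icc a₁ b₁, ∀ m₂ ∈ Set.Icc a₂ b₂,
      |iteratedDerivWithin 2 (μ m₁) (Set.Icc a₂ b₂) m₂| ≤ L₂)
    (η : ℝ → ℝ) (hη : ∀ m₁, η m₁ = ∫ m₂, μ m₁ m₂ ∂(ν₂ m₁))
    (hηC2 : ContDiffOn ℝ 2 η (Set.Icc a₁ b₁))
    (hL₁ : ∀ m₁ ∈ Set.Icc a₁ b₁,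
      |iteratedDerivWithin 2 η (Set.Icc a₁ b₁) m₁| ≤ L₁) :
    |(∫ m₁, η m₁ ∂ν₁) - μ m₁star (m₂star m₁star)|
      ≤ L₁ * (b₁ - a₁) ^ 2 / 8 + L₂ * (b₂ - a₂) ^ 2 / 8 := by
  haveI := hν₂prob m₁star
  have hm₁mem : m₁star ∈ Set.Icc a₁ b₁ := by
    rw [hm₁]; exact myMeanMem h₁ hν₁
  have houter : |(∫ m₁, η m₁ ∂ν₁) - η m₁star| ≤ L₁ * (b₁ - a₁) ^ 2 / 8 := by
    rw [hm₁]
    exact myKey h₁ ν₁ hν₁ hηC2 hL₁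
  have hinner : |η m₁star - μ m₁star (m₂star m₁star)| ≤ L₂ * (b₂ - a₂) ^ 2 / 8 := by
    rw [hη m₁star, hm₂ m₁star]
    exact myKey h₂ (ν₂ m₁star) (hν₂supp m₁star) (hμC2 m₁star hm₁mem) (hL₂ m₁star hm₁mem)
  calc |(∫ m₁, η m₁ ∂ν₁) - μ m₁star (m₂star m₁star)|
      ≤ |(∫ m₁, η m₁ ∂ν₁) - η m₁star| + |η m₁star - μ m₁star (m₂star m₁star)| :=
        abs_sub_le _ _ _
    _ ≤ L₁ * (b₁ - a₁) ^ 2 / 8 + L₂ * (b₂ - a₂) ^ 2 / 8 := add_le_add houter hinner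
end
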